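/- arXiv:2510.18120 — 4 statements merged into one kernel-verified Lean document; each statement's English description precedes it below -/
import Mathlib

section
/- Let {(x_i, y_i)}_{i=1}^n be a dataset with pairwise distinct inputs x_i on the unit sphere S^{d-1} of R^d (d > 1) and labels bounded by |y_i| <= D. Then there exists a two-layer ReLU network f_theta(x) = sum_{k=1}^K v_k * phi(w_k^T x - b_k) + beta of width K <= n that interpolates the dataset (f_theta(x_i) = y_i for all i) and whose training-loss Hessian satisfies lambda_max(Hessian of L at theta) <= 1 + (D^2 + 2)/n. Moreover, if the output bias parameter beta is removed from the model, there exists such an interpolating network with lambda_max(Hessian of L at theta) <= (D^2 + 2)/n. -/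
open MeasureTheory
open scoped ENNReal RealInnerProductSpace NNReal

noncomputable section

abbrev Vec (d : ℕ) : Type := EuclideanSpace ℝ (Fin d)

/-- Parameters of a two-layer ReLU network of width `K` in dimension `d`:
`(v, w, b, β)` with outer weights `v`, inner weights `w`, inner biases `b`,
and output bias `β`. -/
abbrev Params (d K : ℕ) : Type := (Fin K → ℝ) × (Fin K → Vec d) × (Fin K → ℝ) × ℝ

/-- The ReLU function. -/
def relu (z : ℝ) : ℝ := max z 0

/-- The two-layer ReLU network `f_θ`. -/
def netFun {d K : ℕ} (θ : Params d K) (x : Vec d) : ℝ :=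
  (∑ k, θ.1 k * relu (⟪θ.2.1 k, x⟫ - θ.2.2.1 k)) + θ.2.2.2

/-- The (halved, mean) squared-error training loss, as a function of the parameters. -/
def trainLoss {d K n : ℕ} (x : Fin n → Vec d) (y : Fin n → ℝ) (θ : Params d K) : ℝ :=
  (1 / (2 * (n : ℝ))) * ∑ i, (netFun θ (x i) - y i) ^ 2

/-- The squared Euclidean norm of a parameter vector. -/
def paramNormSq {d K : ℕ} (θ : Params d K) : ℝ :=
  (∑ k, (θ.1 k) ^ 2) + (∑ k, ‖θ.2.1 k‖ ^ 2) + (∑ k, (θ.2.2.1 k) ^ 2) + θ.2.2.2 ^ 2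

/-- Largest eigenvalue of the Hessian of the training loss: the supremum of the
second-derivative quadratic form over the (Euclidean) unit sphere of parameter space. -/
def lambdaMaxHessian {d K n : ℕ} (x : Fin n → Vec d) (y : Fin n → ℝ) (θ : Params d K) : ℝ :=
  ⨆ v : {v : Params d K // paramNormSq v = 1},
    iteratedFDeriv ℝ 2 (trainLoss x y) θ ![v.1, v.1]

/-- Parameters below the edge of stability at learning rate `η`. -/
def BEoS {d K n : ℕ} (η : ℝ) (x : Fin n → Vec d) (y : Fin n → ℝ) : Set (Params d K) :=
  {θ | lambdaMaxHessian x y θ ≤ 2 / η}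

/-- Population risk with squared loss `(1/2)(f(x) - y)^2`. -/
def popRisk {d : ℕ} (P : Measure (Vec d × ℝ)) (f : Vec d → ℝ) : ℝ :=
  ∫ z, (1 / 2) * (f z.1 - z.2) ^ 2 ∂P

/-- Empirical risk with squared loss `(1/2)(f(x) - y)^2`. -/
def empRisk {d n : ℕ} (data : Fin n → Vec d × ℝ) (f : Vec d → ℝ) : ℝ :=
  (1 / (n : ℝ)) * ∑ i, (1 / 2) * (f (data i).1 - (data i).2) ^ 2

/-- The generalization gap. -/
def genGap {d n : ℕ} (P : Measure (Vec d × ℝ)) (data : Fin n → Vec d × ℝ) (f : Vec d → ℝ) : ℝ :=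
  |popRisk P f - empRisk data f|

/-- The open halfspace `{x : uᵀx > t}`. -/
def halfSpace {d : ℕ} (u : Vec d) (t : ℝ) : Set (Vec d) := {x | t < ⟪u, x⟫}

/-- The auxiliary weight function `g̃_μ(u,t)`. -/
def gTilde {d : ℕ} (μ : Measure (Vec d)) (u : Vec d) (t : ℝ) : ℝ :=
  (μ (halfSpace u t)).toReal ^ 2 *
    ((∫ x in halfSpace u t, (⟪u, x⟫ - t) ∂μ) / (μ (halfSpace u t)).toReal) *
    Real.sqrt (1 + ‖(μ (halfSpace u t)).toReal⁻¹ • (∫ x in halfSpace u t, x ∂μ)‖ ^ 2)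

/-- The weight function `g_μ(u,t)` of a distribution `μ`. -/
def gWeight {d : ℕ} (μ : Measure (Vec d)) (u : Vec d) (t : ℝ) : ℝ :=
  min (gTilde μ u t) (gTilde μ (-u) (-t))

/-- The empirical measure of the sample `x_1, …, x_n`. -/
def empMeasure {d n : ℕ} (x : Fin n → Vec d) : Measure (Vec d) :=
  ((n : ℝ≥0∞))⁻¹ • ∑ i, Measure.dirac (x i)

/-- The `g`-weighted path norm of a two-layer network. -/
def pathNorm {d K : ℕ} (g : Vec d → ℝ → ℝ) (θ : Params d K) : ℝ :=
  ∑ k, |θ.1 k| * ‖θ.2.1 k‖ * g ((‖θ.2.1 k‖)⁻¹ • θ.2.1 k) (θ.2.2.1 k / ‖θ.2.1 k‖)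

/-- Sup norm of `f` on a set `s`. -/
def supOn {d : ℕ} (f : Vec d → ℝ) (s : Set (Vec d)) : ℝ := ⨆ x : s, |f ↑x|

/-- The uniform distribution on a set `s` regarded as an `m`-dimensional set:
normalized `m`-dimensional Hausdorff measure. -/
def uniformOn {d : ℕ} (m : ℕ) (s : Set (Vec d)) : Measure (Vec d) :=
  (μH[(m : ℝ)] s)⁻¹ • (μH[(m : ℝ)]).restrict s

/-- The uniform distribution on the unit sphere of `ℝ^d`:
normalized `(d-1)`-dimensional Hausdorff measure on the sphere. -/
def sphereUnif (d : ℕ) : Measure (Vec d) :=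
  (μH[(d : ℝ) - 1] (Metric.sphere (0 : Vec d) 1))⁻¹ •
    (μH[(d : ℝ) - 1]).restrict (Metric.sphere (0 : Vec d) 1)

/-- The isotropic `α`-powered-radial distribution: the law of `X = h(R) • U` with
`R ~ Uniform[0,1]`, `U ~ Uniform(S^{d-1})` independent and `h(r) = 1 - (1-r)^{1/α}`. -/
def alphaRadial (d : ℕ) (α : ℝ) : Measure (Vec d) :=
  Measure.map (fun p : ℝ × Vec d => (1 - (1 - p.1) ^ (1 / α)) • p.2)
    ((volume.restrict (Set.Icc (0 : ℝ) 1)).prod (sphereUnif d))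

/-- The thin spherical cap at angular scale `ε` around `u`. -/
def cap {d : ℕ} (u : Vec d) (ε : ℝ) : Set (Vec d) :=
  {x | x ∈ Metric.closedBall (0 : Vec d) 1 ∧ 1 - ε ^ 2 < ⟪u, x⟫}


/-- Parameters of a two-layer ReLU network of width `K` without output bias. -/
abbrev ParamsNB (d K : ℕ) : Type := (Fin K → ℝ) × (Fin K → Vec d) × (Fin K → ℝ)

/-- The two-layer ReLU network without output bias. -/
def netFunNB {d K : ℕ} (θ : ParamsNB d K) (x : Vec d) : ℝ :=
  ∑ k, θ.1 k * relu (⟪θ.2.1 k, x⟫ - θ.2.2 k)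

/-- Training loss as a function of the parameters of a network without output bias. -/
def trainLossNB {d K n : ℕ} (x : Fin n → Vec d) (y : Fin n → ℝ) (θ : ParamsNB d K) : ℝ :=
  (1 / (2 * (n : ℝ))) * ∑ i, (netFunNB θ (x i) - y i) ^ 2

/-- Squared Euclidean norm of a parameter vector (no output bias). -/
def paramNormSqNB {d K : ℕ} (θ : ParamsNB d K) : ℝ :=
  (∑ k, (θ.1 k) ^ 2) + (∑ k, ‖θ.2.1 k‖ ^ 2) + (∑ k, (θ.2.2 k) ^ 2)

/-- Largest eigenvalue of the Hessian of the training loss (no output bias). -/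
def lambdaMaxHessianNB {d K n : ℕ} (x : Fin n → Vec d) (y : Fin n → ℝ) (θ : ParamsNB d K) : ℝ :=
  ⨆ v : {v : ParamsNB d K // paramNormSqNB v = 1},
    iteratedFDeriv ℝ 2 (trainLossNB x y) θ ![v.1, v.1]

-- ===== auxiliary lemmas =====

lemma aux_line_second {E : Type*} [NormedAddCommGroup E] [NormedSpace ℝ E]
    (f : E → ℝ) (hf : ContDiff ℝ 2 f) (θ u : E) :
    iteratedFDeriv ℝ 2 f θ ![u, u] = deriv (deriv fun t : ℝ => f (θ + t • u)) 0 := by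
  have hline : ∀ t : ℝ, HasDerivAt (fun s : ℝ => θ + s • u) u t := by
    intro t
    simpa using ((hasDerivAt_id t).smul_const u).const_add θ
  have hd1 : ∀ t : ℝ, HasDerivAt (fun s : ℝ => f (θ + s • u)) (fderiv ℝ f (θ + t • u) u) t := by
    intro t
    exact ((hf.differentiable (by norm_num) (θ + t • u)).hasFDerivAt).comp_hasDerivAt t (hline t)
  have hderiv1 : deriv (fun t : ℝ => f (θ + t • u)) = fun t => fderiv ℝ f (θ + t • u) u := by
    funext t; exact (hd1 t).deriv
  have hf' : Differentiable ℝ (fderiv ℝ f) :=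
    (hf.fderiv_right (m := 1) (by norm_num)).differentiable (by norm_num)
  have hd2 : HasDerivAt (fun t : ℝ => fderiv ℝ f (θ + t • u) u)
      (fderiv ℝ (fderiv ℝ f) θ u u) 0 := by
    have h1 : HasDerivAt (fun t : ℝ => fderiv ℝ f (θ + t • u))
        (fderiv ℝ (fderiv ℝ f) θ u) 0 := by
      have h0 : (θ + (0:ℝ) • u) = θ := by simp
      have := ((hf' (θ + (0:ℝ) • u)).hasFDerivAt).comp_hasDerivAt 0 (hline 0)
      rw [h0] at this
      exact this
    simpa using h1.clm_apply (hasDerivAt_const 0 u)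
  rw [iteratedFDeriv_two_apply, hderiv1]
  · simp [hd2.deriv]

lemma aux_cauchy3 (M dl v a wt c W2 : ℝ) (h : dl^2 + 2*v^2 ≤ M) (hw : wt^2 ≤ W2) :
    (a*dl + v*(wt - c))^2 ≤ M*(a^2 + W2 + c^2) := by
  have hM0 : 0 ≤ M := le_trans (by positivity) h
  nlinarith [sq_nonneg (dl*wt - v*a), sq_nonneg (dl*c + v*a), sq_nonneg (v*c + v*wt),
    mul_nonneg hM0 (by linarith : (0:ℝ) ≤ W2 - wt^2),
    mul_nonneg (by linarith : (0:ℝ) ≤ M - (dl^2 + 2*v^2)) (by positivity : (0:ℝ) ≤ a^2 + wt^2 + c^2)]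

lemma aux_sum_bound (n : ℕ) (M S τ T G : ℝ) (hM : 2 ≤ M) (hS : 0 ≤ S)
    (hG0 : 0 ≤ G) (hGS : G ≤ M*S) (hT : T^2 ≤ n*G) (hsum : S + τ^2 = 1) :
    G + 2*τ*T + n*τ^2 ≤ M + n := by
  have hM0 : (0:ℝ) < M := by linarith
  have h1 : 2*M*τ*T ≤ M^2*τ^2 + T^2 := by nlinarith [sq_nonneg (M*τ - T)]
  have h2 : T^2 ≤ (n:ℝ)*(M*S) := le_trans hT (by nlinarith [Nat.cast_nonneg (α := ℝ) n])
  have e1 : M^2*(S+τ^2) = M^2 := by rw [hsum]; ring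
  have e2 : M*(n:ℝ)*(S+τ^2) = M*(n:ℝ) := by rw [hsum]; ring
  have h3 : M*(G + 2*τ*T + (n:ℝ)*τ^2) ≤ M*(M + n) := by
    nlinarith [mul_le_mul_of_nonneg_left hGS hM0.le]
  exact le_of_mul_le_mul_left h3 hM0

lemma aux_construction {d n : ℕ} (x : Fin n → Vec d) (y : Fin n → ℝ) (D₀ : ℝ)
    (hx : ∀ i, x i ∈ Metric.sphere (0 : Vec d) 1)
    (hinj : Function.Injective x) (hy : ∀ i, |y i| ≤ D₀) :
    ∃ v δ s : Fin n → ℝ,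
      (∀ i, 0 < δ i) ∧ (∀ i, v i * δ i = y i) ∧
      (∀ i, (δ i)^2 + 2*(v i)^2 ≤ D₀^2 + 2) ∧
      (∀ i, 0 < s i) ∧ (∀ i j, j ≠ i → δ i - s i * (1 - ⟪x i, x j⟫) < 0) := by
  have hnorm : ∀ i, ‖x i‖ = 1 := fun i => mem_sphere_zero_iff_norm.mp (hx i)
  have hcos : ∀ i j, j ≠ i → ⟪x i, x j⟫ < 1 := by
    intro i j hne
    have h1 : x i - x j ≠ 0 := sub_ne_zero.mpr fun h => hne (hinj h).symm
    have h2 : 0 < ‖x i - x j‖ ^ 2 := by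
      have := norm_pos_iff.mpr h1
      positivity
    have h3 := norm_sub_sq_real (x i) (x j)
    rw [hnorm i, hnorm j] at h3
    nlinarith
  set δ : Fin n → ℝ := fun i => if y i = 0 then 1 else |y i| with hδdef
  have hδpos : ∀ i, 0 < δ i := by
    intro i; simp only [hδdef]; split
    · norm_num
    · next h => exact abs_pos.mpr h
  have hex : ∀ i : Fin n, ∃ si : ℝ, 0 < si ∧ ∀ j, j ≠ i → δ i - si * (1 - ⟪x i, x j⟫) < 0 := by
    intro i
    obtain ⟨Mi, hMi⟩ := Finite.exists_le (fun j : Fin n => δ i / (1 - ⟪x i, x j⟫))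
    refine ⟨max 1 (Mi + 1), lt_of_lt_of_le one_pos (le_max_left _ _), ?_⟩
    intro j hj
    have hpos : 0 < 1 - ⟪x i, x j⟫ := by linarith [hcos i j hj]
    have h1 : δ i / (1 - ⟪x i, x j⟫) < max 1 (Mi + 1) :=
      lt_of_le_of_lt (hMi j) (lt_of_lt_of_le (by linarith) (le_max_right _ _))
    have := (div_lt_iff₀ hpos).mp h1
    nlinarith
  choose s hs1 hs2 using hex
  refine ⟨fun i => if y i = 0 then 0 else y i / |y i|, δ, s, hδpos, ?_, ?_, hs1, hs2⟩
  · intro i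
    simp only [hδdef]
    by_cases h : y i = 0 <;> simp [h]
  · intro i
    have hD : 0 ≤ D₀ := le_trans (abs_nonneg _) (hy i)
    by_cases h : y i = 0
    · simp only [hδdef, h, if_pos trivial, if_true]
      simp
      nlinarith
    · simp only [hδdef, if_neg h]
      have h1 : |y i| ^ 2 ≤ D₀ ^ 2 := by nlinarith [abs_nonneg (y i), hy i]
      have h2 : (y i / |y i|) ^ 2 = 1 := by
        rw [div_pow, sq_abs, div_self (by positivity : y i ^ 2 ≠ 0)]
      nlinarith

lemma aux_mainNB {d n : ℕ} (hn : 0 < n) (x : Fin n → Vec d) (y : Fin n → ℝ) (D₀ : ℝ)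
    (hx : ∀ i, x i ∈ Metric.sphere (0 : Vec d) 1)
    (hinj : Function.Injective x) (hy : ∀ i, |y i| ≤ D₀) :
    ∃ K : ℕ, K ≤ n ∧ ∃ θ : ParamsNB d K,
      (∀ k, θ.2.1 k ≠ 0) ∧
      (∀ i, netFunNB θ (x i) = y i) ∧
      lambdaMaxHessianNB x y θ ≤ (D₀ ^ 2 + 2) / (n : ℝ) := by
  obtain ⟨v, δ, s, hδ, hvδ, hδv, hspos, hsep⟩ := aux_construction x y D₀ hx hinj hy
  have hn0 : (0:ℝ) < n := Nat.cast_pos.mpr hn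
  have hnorm : ∀ i, ‖x i‖ = 1 := fun i => mem_sphere_zero_iff_norm.mp (hx i)
  have hself : ∀ i, ⟪x i, x i⟫ = 1 := fun i => by
    rw [real_inner_self_eq_norm_sq, hnorm i]; norm_num
  set M : ℝ := D₀ ^ 2 + 2 with hM
  have hM2 : 2 ≤ M := by rw [hM]; nlinarith [sq_nonneg D₀]
  refine ⟨n, le_rfl, (v, fun i => s i • x i, fun i => s i - δ i), ?_, ?_, ?_⟩
  · intro k
    exact smul_ne_zero (ne_of_gt (hspos k))
      (fun h => by simpa [h] using hnorm k)
  · -- interpolation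
    intro i
    unfold netFunNB
    rw [Finset.sum_eq_single i]
    · have hval : ⟪s i • x i, x i⟫ - (s i - δ i) = δ i := by
        rw [real_inner_smul_left, hself i]; ring
      simp only [hval]
      unfold relu
      rw [max_eq_left (hδ i).le]
      exact hvδ i
    · intro k _ hki
      have hval : ⟪s k • x k, x i⟫ - (s k - δ k) = δ k - s k * (1 - ⟪x k, x i⟫) := by
        rw [real_inner_smul_left]; ring
      have hneg := hsep k i (Ne.symm hki)
      simp only [hval]
      unfold relu
      rw [max_eq_right (by linarith), mul_zero]
    · simp
  · -- Hessian bound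
    set θ : ParamsNB d n := (v, fun i => s i • x i, fun i => s i - δ i) with hθ
    have hactself : ∀ k, 0 < ⟪θ.2.1 k, x k⟫ - θ.2.2 k := by
      intro k
      have : ⟪s k • x k, x k⟫ - (s k - δ k) = δ k := by
        rw [real_inner_smul_left, hself k]; ring
      simp only [hθ, this]
      exact hδ k
    have hactneg : ∀ k j, k ≠ j → ⟪θ.2.1 k, x j⟫ - θ.2.2 k < 0 := by
      intro k j hkj
      have : ⟪s k • x k, x j⟫ - (s k - δ k) = δ k - s k * (1 - ⟪x k, x j⟫) := by
        rw [real_inner_smul_left]; ring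
      simp only [hθ, this]
      exact hsep k j (Ne.symm hkj)
    set Qf : ParamsNB d n → ℝ := fun p =>
      (1 / (2 * (n : ℝ))) * ∑ i, (p.1 i * (⟪p.2.1 i, x i⟫ - p.2.2 i) - y i) ^ 2 with hQf
    have hQsmooth : ContDiff ℝ 2 Qf := by
      apply ContDiff.mul contDiff_const
      apply ContDiff.sum
      intro i _
      apply ContDiff.pow
      have hin : ContDiff ℝ 2 (fun p : ParamsNB d n => ⟪p.2.1 i, x i⟫) :=
        ContDiff.inner ℝ (by fun_prop) contDiff_const
      fun_prop
    have hcont : ∀ k j : Fin n, Continuous (fun p : ParamsNB d n => ⟪p.2.1 k, x j⟫ - p.2.2 k) := by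
      intro k j
      have h1 : Continuous (fun p : ParamsNB d n => p.2.1 k) :=
        (continuous_apply k).comp (continuous_fst.comp continuous_snd)
      have h2 : Continuous (fun p : ParamsNB d n => p.2.2 k) :=
        (continuous_apply k).comp (continuous_snd.comp continuous_snd)
      exact (h1.inner continuous_const).sub h2
    set U : Set (ParamsNB d n) := ⋂ (k : Fin n) (j : Fin n),
      {p : ParamsNB d n | if k = j then 0 < ⟪p.2.1 k, x j⟫ - p.2.2 k
        else ⟪p.2.1 k, x j⟫ - p.2.2 k < 0} with hU
    have hUopen : IsOpen U := by
      apply isOpen_iInter_of_finite; intro k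
      apply isOpen_iInter_of_finite; intro j
      by_cases hkj : k = j
      · simp only [if_pos hkj]
        exact isOpen_lt continuous_const (hcont k j)
      · simp only [if_neg hkj]
        exact isOpen_lt (hcont k j) continuous_const
    have hθU : θ ∈ U := by
      simp only [hU, Set.mem_iInter, Set.mem_setOf_eq]
      intro k j
      split
      · next h => subst h; exact hactself k
      · next h => exact hactneg k j h
    have hEqOn : ∀ p ∈ U, trainLossNB x y p = Qf p := by
      intro p hp
      simp only [hU, Set.mem_iInter, Set.mem_setOf_eq] at hp
      unfold trainLossNB netFunNB
      simp only [hQf]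
      congr 1
      apply Finset.sum_congr rfl
      intro i _
      have hsum : ∑ k, p.1 k * relu (⟪p.2.1 k, x i⟫ - p.2.2 k)
          = p.1 i * (⟪p.2.1 i, x i⟫ - p.2.2 i) := by
        rw [Finset.sum_eq_single i]
        · have h := hp i i; rw [if_pos rfl] at h
          unfold relu; rw [max_eq_left h.le]
        · intro k _ hki
          have h := hp k i; rw [if_neg hki] at h
          unfold relu; rw [max_eq_right h.le, mul_zero]
        · simp
      rw [hsum]
    have heq : trainLossNB x y =ᶠ[nhds θ] Qf :=
      Filter.eventuallyEq_of_mem (hUopen.mem_nhds hθU) hEqOn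
    haveI : Nonempty {u : ParamsNB d n // paramNormSqNB u = 1} := by
      refine ⟨⟨((0, 0, Pi.single (⟨0, hn⟩ : Fin n) (1:ℝ)) : ParamsNB d n), ?_⟩⟩
      have hps : ∀ k : Fin n, ((Pi.single (⟨0, hn⟩ : Fin n) (1:ℝ) : Fin n → ℝ) k) ^ 2
          = if k = ⟨0, hn⟩ then 1 else 0 := by
        intro k; by_cases h : k = ⟨0, hn⟩ <;> simp [Pi.single_apply, h]
      simp only [paramNormSqNB]
      rw [Finset.sum_congr rfl fun k _ => hps k, Finset.sum_ite_eq' Finset.univ _ (fun _ => (1:ℝ))]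
      simp
    apply ciSup_le
    rintro ⟨⟨a, W, c⟩, hu⟩
    set p : Fin n → ℝ := fun i => a i * δ i + v i * (⟪W i, x i⟫ - c i) with hpdef
    set q : Fin n → ℝ := fun i => a i * (⟪W i, x i⟫ - c i) with hqdef
    set A : ℝ := (1 / (2 * (n : ℝ))) * ∑ i, (p i) ^ 2 with hA
    set B : ℝ := (1 / (2 * (n : ℝ))) * ∑ i, (2 * p i * q i) with hB
    set C : ℝ := (1 / (2 * (n : ℝ))) * ∑ i, (q i) ^ 2 with hC
    have hline : (fun t : ℝ => Qf (θ + t • (a, W, c)))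
        = fun t => A * t^2 + B * t^3 + C * t^4 := by
      funext t
      have hR : A * t^2 + B * t^3 + C * t^4
          = (1 / (2 * (n : ℝ))) * ∑ i, (p i * t + q i * t^2)^2 := by
        have h1 : ∀ i : Fin n, (p i * t + q i * t^2)^2
            = (p i)^2 * t^2 + (2 * p i * q i) * t^3 + (q i)^2 * t^4 := fun i => by ring
        rw [Finset.sum_congr rfl fun i _ => h1 i, Finset.sum_add_distrib, Finset.sum_add_distrib,
          ← Finset.sum_mul, ← Finset.sum_mul, ← Finset.sum_mul, hA, hB, hC]
        ring
      rw [hR]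
      simp only [hQf]
      congr 1
      apply Finset.sum_congr rfl
      intro i _
      have c1 : (θ + t • ((a, W, c) : ParamsNB d n)).1 i = v i + t * a i := by
        simp [hθ, Prod.fst_add, Prod.smul_fst]
      have c2 : (θ + t • ((a, W, c) : ParamsNB d n)).2.1 i = s i • x i + t • W i := by
        simp [hθ]
      have c3 : (θ + t • ((a, W, c) : ParamsNB d n)).2.2 i = (s i - δ i) + t * c i := by
        simp [hθ]
      rw [c1, c2, c3, inner_add_left, real_inner_smul_left, real_inner_smul_left, hself i,
        ← hvδ i, hpdef, hqdef]
      ring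
    have H1 : ∀ t : ℝ, HasDerivAt (fun t : ℝ => A * t^2 + B * t^3 + C * t^4)
        (2*A*t + 3*B*t^2 + 4*C*t^3) t := by
      intro t
      have h := (((hasDerivAt_pow 2 t).const_mul A).add
        ((hasDerivAt_pow 3 t).const_mul B)).add ((hasDerivAt_pow 4 t).const_mul C)
      refine h.congr_deriv ?_
      push_cast
      ring
    have H2 : HasDerivAt (fun t : ℝ => 2*A*t + 3*B*t^2 + 4*C*t^3) (2*A) 0 := by
      have h := (((hasDerivAt_id (0:ℝ)).const_mul (2*A)).add
        ((hasDerivAt_pow 2 (0:ℝ)).const_mul (3*B))).add ((hasDerivAt_pow 3 (0:ℝ)).const_mul (4*C))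
      refine h.congr_deriv ?_
      norm_num
    have HH : iteratedFDeriv ℝ 2 (trainLossNB x y) θ
        ![((a, W, c) : ParamsNB d n), ((a, W, c) : ParamsNB d n)] = 2 * A := by
      have e1 : iteratedFDeriv ℝ 2 (trainLossNB x y) θ
          ![((a, W, c) : ParamsNB d n), ((a, W, c) : ParamsNB d n)]
          = fderiv ℝ (fderiv ℝ (trainLossNB x y)) θ (a, W, c) (a, W, c) := by
        rw [iteratedFDeriv_two_apply]
        simp
      have e2 : iteratedFDeriv ℝ 2 Qf θ
          ![((a, W, c) : ParamsNB d n), ((a, W, c) : ParamsNB d n)]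
          = fderiv ℝ (fderiv ℝ Qf) θ (a, W, c) (a, W, c) := by
        rw [iteratedFDeriv_two_apply]
        simp
      rw [e1, (heq.fderiv (𝕜 := ℝ)).fderiv_eq, ← e2,
        aux_line_second Qf hQsmooth θ ((a, W, c) : ParamsNB d n), hline]
      have hd : deriv (fun t : ℝ => A * t^2 + B * t^3 + C * t^4)
          = fun t => 2*A*t + 3*B*t^2 + 4*C*t^3 := funext fun t => (H1 t).deriv
      rw [hd, H2.deriv]
    rw [HH]
    -- final bound
    have hW : ∀ i, ⟪W i, x i⟫^2 ≤ ‖W i‖^2 := by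
      intro i
      have h := abs_real_inner_le_norm (W i) (x i)
      rw [hnorm i, mul_one] at h
      calc ⟪W i, x i⟫^2 = |⟪W i, x i⟫|^2 := (sq_abs _).symm
        _ ≤ ‖W i‖^2 := by nlinarith [abs_nonneg ⟪W i, x i⟫]
    have hpt : ∀ i, (p i)^2 ≤ M * (a i^2 + ‖W i‖^2 + (c i)^2) := fun i =>
      aux_cauchy3 M (δ i) (v i) (a i) ⟪W i, x i⟫ (c i) (‖W i‖^2) (hδv i) (hW i)
    have hsum : ∑ i, (p i)^2
        ≤ M * ((∑ i, a i^2) + (∑ i, ‖W i‖^2) + (∑ i, (c i)^2)) := by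
      calc ∑ i, (p i)^2 ≤ ∑ i, M * (a i^2 + ‖W i‖^2 + (c i)^2) :=
            Finset.sum_le_sum fun i _ => hpt i
        _ = M * ((∑ i, a i^2) + (∑ i, ‖W i‖^2) + (∑ i, (c i)^2)) := by
            rw [← Finset.mul_sum, Finset.sum_add_distrib, Finset.sum_add_distrib]
    have hS1 : (∑ i, a i^2) + (∑ i, ‖W i‖^2) + (∑ i, (c i)^2) = 1 := hu
    rw [hS1, mul_one] at hsum
    have : 2 * A = (1 / (n:ℝ)) * ∑ i, (p i)^2 := by
      rw [hA]; field_simp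
    rw [this, hM] at *
    calc (1 / (n:ℝ)) * ∑ i, (p i)^2 ≤ (1 / (n:ℝ)) * (D₀^2 + 2) := by
          apply mul_le_mul_of_nonneg_left hsum (by positivity)
      _ = (D₀^2 + 2) / n := by ring

lemma aux_mainB {d n : ℕ} (hn : 0 < n) (x : Fin n → Vec d) (y : Fin n → ℝ) (D₀ : ℝ)
    (hx : ∀ i, x i ∈ Metric.sphere (0 : Vec d) 1)
    (hinj : Function.Injective x) (hy : ∀ i, |y i| ≤ D₀) :
    ∃ K : ℕ, K ≤ n ∧ ∃ θ : Params d K,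
      (∀ k, θ.2.1 k ≠ 0) ∧
      (∀ i, netFun θ (x i) = y i) ∧
      lambdaMaxHessian x y θ ≤ 1 + (D₀ ^ 2 + 2) / (n : ℝ) := by
  obtain ⟨v, δ, s, hδ, hvδ, hδv, hspos, hsep⟩ := aux_construction x y D₀ hx hinj hy
  have hn0 : (0:ℝ) < n := Nat.cast_pos.mpr hn
  have hnorm : ∀ i, ‖x i‖ = 1 := fun i => mem_sphere_zero_iff_norm.mp (hx i)
  have hself : ∀ i, ⟪x i, x i⟫ = 1 := fun i => by
    rw [real_inner_self_eq_norm_sq, hnorm i]; norm_num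
  set M : ℝ := D₀ ^ 2 + 2 with hM
  have hM2 : 2 ≤ M := by rw [hM]; nlinarith [sq_nonneg D₀]
  refine ⟨n, le_rfl, (v, fun i => s i • x i, fun i => s i - δ i, 0), ?_, ?_, ?_⟩
  · intro k
    exact smul_ne_zero (ne_of_gt (hspos k))
      (fun h => by simpa [h] using hnorm k)
  · -- interpolation
    intro i
    unfold netFun
    rw [show ((v, fun i => s i • x i, fun i => s i - δ i, (0:ℝ)) : Params d n).2.2.2 = 0 from rfl,
      add_zero]
    rw [Finset.sum_eq_single i]
    · have hval : ⟪s i • x i, x i⟫ - (s i - δ i) = δ i := by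
        rw [real_inner_smul_left, hself i]; ring
      simp only [hval]
      unfold relu
      rw [max_eq_left (hδ i).le]
      exact hvδ i
    · intro k _ hki
      have hval : ⟪s k • x k, x i⟫ - (s k - δ k) = δ k - s k * (1 - ⟪x k, x i⟫) := by
        rw [real_inner_smul_left]; ring
      have hneg := hsep k i (Ne.symm hki)
      simp only [hval]
      unfold relu
      rw [max_eq_right (by linarith), mul_zero]
    · simp
  · -- Hessian bound
    set θ : Params d n := (v, fun i => s i • x i, fun i => s i - δ i, 0) with hθ
    have hactself : ∀ k, 0 < ⟪θ.2.1 k, x k⟫ - θ.2.2.1 k := by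
      intro k
      have : ⟪s k • x k, x k⟫ - (s k - δ k) = δ k := by
        rw [real_inner_smul_left, hself k]; ring
      simp only [hθ, this]
      exact hδ k
    have hactneg : ∀ k j, k ≠ j → ⟪θ.2.1 k, x j⟫ - θ.2.2.1 k < 0 := by
      intro k j hkj
      have : ⟪s k • x k, x j⟫ - (s k - δ k) = δ k - s k * (1 - ⟪x k, x j⟫) := by
        rw [real_inner_smul_left]; ring
      simp only [hθ, this]
      exact hsep k j (Ne.symm hkj)
    set Qf : Params d n → ℝ := fun p =>
      (1 / (2 * (n : ℝ))) * ∑ i, (p.1 i * (⟪p.2.1 i, x i⟫ - p.2.2.1 i) + p.2.2.2 - y i) ^ 2 with hQf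
    have hQsmooth : ContDiff ℝ 2 Qf := by
      apply ContDiff.mul contDiff_const
      apply ContDiff.sum
      intro i _
      apply ContDiff.pow
      have hin : ContDiff ℝ 2 (fun p : Params d n => ⟪p.2.1 i, x i⟫) :=
        ContDiff.inner ℝ (by fun_prop) contDiff_const
      fun_prop
    have hcont : ∀ k j : Fin n, Continuous (fun p : Params d n => ⟪p.2.1 k, x j⟫ - p.2.2.1 k) := by
      intro k j
      have h1 : Continuous (fun p : Params d n => p.2.1 k) :=
        (continuous_apply k).comp (continuous_fst.comp continuous_snd)
      have h2 : Continuous (fun p : Params d n => p.2.2.1 k) :=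
        (continuous_apply k).comp (continuous_fst.comp (continuous_snd.comp continuous_snd))
      exact (h1.inner continuous_const).sub h2
    set U : Set (Params d n) := ⋂ (k : Fin n) (j : Fin n),
      {p : Params d n | if k = j then 0 < ⟪p.2.1 k, x j⟫ - p.2.2.1 k
        else ⟪p.2.1 k, x j⟫ - p.2.2.1 k < 0} with hU
    have hUopen : IsOpen U := by
      apply isOpen_iInter_of_finite; intro k
      apply isOpen_iInter_of_finite; intro j
      by_cases hkj : k = j
      · simp only [if_pos hkj]
        exact isOpen_lt continuous_const (hcont k j)
      · simp only [if_neg hkj]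
        exact isOpen_lt (hcont k j) continuous_const
    have hθU : θ ∈ U := by
      simp only [hU, Set.mem_iInter, Set.mem_setOf_eq]
      intro k j
      split
      · next h => subst h; exact hactself k
      · next h => exact hactneg k j h
    have hEqOn : ∀ p ∈ U, trainLoss x y p = Qf p := by
      intro p hp
      simp only [hU, Set.mem_iInter, Set.mem_setOf_eq] at hp
      unfold trainLoss netFun
      simp only [hQf]
      congr 1
      apply Finset.sum_congr rfl
      intro i _
      have hsum : ∑ k, p.1 k * relu (⟪p.2.1 k, x i⟫ - p.2.2.1 k)
          = p.1 i * (⟪p.2.1 i, x i⟫ - p.2.2.1 i) := by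
        rw [Finset.sum_eq_single i]
        · have h := hp i i; rw [if_pos rfl] at h
          unfold relu; rw [max_eq_left h.le]
        · intro k _ hki
          have h := hp k i; rw [if_neg hki] at h
          unfold relu; rw [max_eq_right h.le, mul_zero]
        · simp
      rw [hsum]
    have heq : trainLoss x y =ᶠ[nhds θ] Qf :=
      Filter.eventuallyEq_of_mem (hUopen.mem_nhds hθU) hEqOn
    haveI : Nonempty {u : Params d n // paramNormSq u = 1} := by
      refine ⟨⟨((0, 0, 0, 1) : Params d n), ?_⟩⟩
      simp [paramNormSq]
    apply ciSup_le
    rintro ⟨⟨a, W, c, τ⟩, hu⟩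
    set p : Fin n → ℝ := fun i => a i * δ i + v i * (⟪W i, x i⟫ - c i) + τ with hpdef
    set q : Fin n → ℝ := fun i => a i * (⟪W i, x i⟫ - c i) with hqdef
    set A : ℝ := (1 / (2 * (n : ℝ))) * ∑ i, (p i) ^ 2 with hA
    set B : ℝ := (1 / (2 * (n : ℝ))) * ∑ i, (2 * p i * q i) with hB
    set C : ℝ := (1 / (2 * (n : ℝ))) * ∑ i, (q i) ^ 2 with hC
    have hline : (fun t : ℝ => Qf (θ + t • (a, W, c, τ)))
        = fun t => A * t^2 + B * t^3 + C * t^4 := by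
      funext t
      have hR : A * t^2 + B * t^3 + C * t^4
          = (1 / (2 * (n : ℝ))) * ∑ i, (p i * t + q i * t^2)^2 := by
        have h1 : ∀ i : Fin n, (p i * t + q i * t^2)^2
            = (p i)^2 * t^2 + (2 * p i * q i) * t^3 + (q i)^2 * t^4 := fun i => by ring
        rw [Finset.sum_congr rfl fun i _ => h1 i, Finset.sum_add_distrib, Finset.sum_add_distrib,
          ← Finset.sum_mul, ← Finset.sum_mul, ← Finset.sum_mul, hA, hB, hC]
        ring
      rw [hR]
      simp only [hQf]
      congr 1
      apply Finset.sum_congr rfl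
      intro i _
      have c1 : (θ + t • ((a, W, c, τ) : Params d n)).1 i = v i + t * a i := by
        simp [hθ, Prod.fst_add, Prod.smul_fst]
      have c2 : (θ + t • ((a, W, c, τ) : Params d n)).2.1 i = s i • x i + t • W i := by
        simp [hθ]
      have c3 : (θ + t • ((a, W, c, τ) : Params d n)).2.2.1 i = (s i - δ i) + t * c i := by
        simp [hθ]
      have c4 : (θ + t • ((a, W, c, τ) : Params d n)).2.2.2 = t * τ := by
        simp [hθ]
      rw [c1, c2, c3, c4, inner_add_left, real_inner_smul_left, real_inner_smul_left, hself i,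
        ← hvδ i, hpdef, hqdef]
      ring
    have H1 : ∀ t : ℝ, HasDerivAt (fun t : ℝ => A * t^2 + B * t^3 + C * t^4)
        (2*A*t + 3*B*t^2 + 4*C*t^3) t := by
      intro t
      have h := (((hasDerivAt_pow 2 t).const_mul A).add
        ((hasDerivAt_pow 3 t).const_mul B)).add ((hasDerivAt_pow 4 t).const_mul C)
      refine h.congr_deriv ?_
      push_cast
      ring
    have H2 : HasDerivAt (fun t : ℝ => 2*A*t + 3*B*t^2 + 4*C*t^3) (2*A) 0 := by
      have h := (((hasDerivAt_id (0:ℝ)).const_mul (2*A)).add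
        ((hasDerivAt_pow 2 (0:ℝ)).const_mul (3*B))).add ((hasDerivAt_pow 3 (0:ℝ)).const_mul (4*C))
      refine h.congr_deriv ?_
      norm_num
    have HH : iteratedFDeriv ℝ 2 (trainLoss x y) θ
        ![((a, W, c, τ) : Params d n), ((a, W, c, τ) : Params d n)] = 2 * A := by
      have e1 : iteratedFDeriv ℝ 2 (trainLoss x y) θ
          ![((a, W, c, τ) : Params d n), ((a, W, c, τ) : Params d n)]
          = fderiv ℝ (fderiv ℝ (trainLoss x y)) θ (a, W, c, τ) (a, W, c, τ) := by
        rw [iteratedFDeriv_two_apply]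
        simp
      have e2 : iteratedFDeriv ℝ 2 Qf θ
          ![((a, W, c, τ) : Params d n), ((a, W, c, τ) : Params d n)]
          = fderiv ℝ (fderiv ℝ Qf) θ (a, W, c, τ) (a, W, c, τ) := by
        rw [iteratedFDeriv_two_apply]
        simp
      rw [e1, (heq.fderiv (𝕜 := ℝ)).fderiv_eq, ← e2,
        aux_line_second Qf hQsmooth θ ((a, W, c, τ) : Params d n), hline]
      have hd : deriv (fun t : ℝ => A * t^2 + B * t^3 + C * t^4)
          = fun t => 2*A*t + 3*B*t^2 + 4*C*t^3 := funext fun t => (H1 t).deriv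
      rw [hd, H2.deriv]
    rw [HH]
    -- final bound
    set pp : Fin n → ℝ := fun i => a i * δ i + v i * (⟪W i, x i⟫ - c i) with hppdef
    have hW : ∀ i, ⟪W i, x i⟫^2 ≤ ‖W i‖^2 := by
      intro i
      have h := abs_real_inner_le_norm (W i) (x i)
      rw [hnorm i, mul_one] at h
      calc ⟪W i, x i⟫^2 = |⟪W i, x i⟫|^2 := (sq_abs _).symm
        _ ≤ ‖W i‖^2 := by nlinarith [abs_nonneg ⟪W i, x i⟫]
    have hpt : ∀ i, (pp i)^2 ≤ M * (a i^2 + ‖W i‖^2 + (c i)^2) := fun i =>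
      aux_cauchy3 M (δ i) (v i) (a i) ⟪W i, x i⟫ (c i) (‖W i‖^2) (hδv i) (hW i)
    set S : ℝ := (∑ i, a i^2) + (∑ i, ‖W i‖^2) + (∑ i, (c i)^2) with hSdef
    set T : ℝ := ∑ i, pp i with hTdef
    set G : ℝ := ∑ i, (pp i)^2 with hGdef
    have hS : S + τ^2 = 1 := hu
    have hS0 : 0 ≤ S := by positivity
    have hG0 : 0 ≤ G := by positivity
    have hGS : G ≤ M * S := by
      calc G ≤ ∑ i, M * (a i^2 + ‖W i‖^2 + (c i)^2) :=
            Finset.sum_le_sum fun i _ => hpt i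
        _ = M * S := by
            rw [hSdef, ← Finset.mul_sum, Finset.sum_add_distrib, Finset.sum_add_distrib]
    have hT : T^2 ≤ (n:ℝ) * G := by
      have h := sq_sum_le_card_mul_sum_sq (s := (Finset.univ : Finset (Fin n))) (f := pp)
      simpa [hTdef, hGdef] using h
    have hexp : ∑ i, (p i)^2 = G + 2*τ*T + (n:ℝ)*τ^2 := by
      have h1 : ∀ i : Fin n, (p i)^2 = (pp i)^2 + 2*τ*pp i + τ^2 := by
        intro i; simp only [hpdef, hppdef]; ring
      rw [Finset.sum_congr rfl fun i _ => h1 i, Finset.sum_add_distrib, Finset.sum_add_distrib,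
        ← Finset.mul_sum, Finset.sum_const, Finset.card_univ, Fintype.card_fin, nsmul_eq_mul,
        hTdef, hGdef]
    have hbound : ∑ i, (p i)^2 ≤ M + n := by
      rw [hexp]
      exact aux_sum_bound n M S τ T G hM2 hS0 hG0 hGS hT hS
    have h2A : 2 * A = (1 / (n:ℝ)) * ∑ i, (p i)^2 := by
      rw [hA]; field_simp
    rw [h2A]
    calc (1 / (n:ℝ)) * ∑ i, (p i)^2 ≤ (1 / (n:ℝ)) * (M + n) := by
          apply mul_le_mul_of_nonneg_left hbound (by positivity)
      _ = 1 + M / n := by field_simp; ring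


/-- Theorem 3.5: Flat interpolation of spherically supported data, with
width at most `n`. For pairwise distinct inputs on the unit sphere and labels bounded by
`D₀`, there is an interpolating two-layer ReLU network of width `K ≤ n` whose training-loss
Hessian has largest eigenvalue at most `1 + (D₀² + 2)/n`; if the output bias is removed, the
bound improves to `(D₀² + 2)/n`. -/
theorem statement3 (d n : ℕ) (hd : 1 < d) (hn : 0 < n)
    (x : Fin n → Vec d) (y : Fin n → ℝ) (D₀ : ℝ)
    (hx : ∀ i, x i ∈ Metric.sphere (0 : Vec d) 1)
    (hinj : Function.Injective x)
    (hy : ∀ i, |y i| ≤ D₀) :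
    (∃ K : ℕ, K ≤ n ∧ ∃ θ : Params d K,
      (∀ k, θ.2.1 k ≠ 0) ∧
      (∀ i, netFun θ (x i) = y i) ∧
      lambdaMaxHessian x y θ ≤ 1 + (D₀ ^ 2 + 2) / (n : ℝ)) ∧
    (∃ K : ℕ, K ≤ n ∧ ∃ θ : ParamsNB d K,
      (∀ k, θ.2.1 k ≠ 0) ∧
      (∀ i, netFunNB θ (x i) = y i) ∧
      lambdaMaxHessianNB x y θ ≤ (D₀ ^ 2 + 2) / (n : ℝ)) := by
  exact ⟨aux_mainB hn x y D₀ hx hinj hy, aux_mainNB hn x y D₀ hx hinj hy⟩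

end
end

section
/- Let P_X = sum_{j=1}^J p_j P_{X,j} be a mixture distribution on R^d where each p_j > 0, sum_j p_j = 1, and each component P_{X,j} is supported on the unit disc B_1^{V_j} of an affine subspace V_j (in particular ||X|| <= 1 almost surely under each P_{X,j}). Let g be the weight function induced by the mixture P_X and g_j the weight function induced by the component P_{X,j}. Then for every j in {1, ..., J} and every (u, t) in S^{d-1} x R, g(u, t) >= (p_j^2 / sqrt(2)) * g_j(u, t). Consequently, for any M, C > 0, every function in the class F_g(B_1^{V_j}; M, C) belongs to F_{g_j}(B_1^{V_j}; M, sqrt(2) C / p_j^2). -/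
open MeasureTheory
open scoped ENNReal RealInnerProductSpace NNReal

noncomputable section

/-- Membership in the bounded `g`-weighted variation class `F_g(Ω; M, C)`: `f` is bounded by
`M` on `Ω` and admits a representation `f(x) = ∫ φ(uᵀx - t) dν(u,t) + cᵀx + c₀` on `Ω` for a
finite signed Radon measure `ν` (given by its Jordan pair `νp, νm`) supported on
`S^{d-1} × [-1, 1]` with `g`-weighted variation `∫ g d|ν| ≤ C`. -/
def VgMem {d : ℕ} (g : Vec d → ℝ → ℝ) (Ω : Set (Vec d)) (M C : ℝ) (f : Vec d → ℝ) : Prop :=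
  (∀ x ∈ Ω, |f x| ≤ M) ∧
  ∃ νp νm : Measure (Vec d × ℝ), IsFiniteMeasure νp ∧ IsFiniteMeasure νm ∧
    νp ((Metric.sphere (0 : Vec d) 1 ×ˢ Set.Icc (-1 : ℝ) 1)ᶜ) = 0 ∧
    νm ((Metric.sphere (0 : Vec d) 1 ×ˢ Set.Icc (-1 : ℝ) 1)ᶜ) = 0 ∧
    (∃ (c : Vec d) (c₀ : ℝ), ∀ x ∈ Ω,
      f x = (∫ q, relu (⟪q.1, x⟫ - q.2) ∂νp) - (∫ q, relu (⟪q.1, x⟫ - q.2) ∂νm)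
              + ⟪c, x⟫ + c₀) ∧
    (∫ q, g q.1 q.2 ∂νp) + (∫ q, g q.1 q.2 ∂νm) ≤ C

section Statement7Aux

variable {d : ℕ}

lemma measurableSet_halfSpace (u : Vec d) (t : ℝ) : MeasurableSet (halfSpace u t) :=
  (isOpen_lt continuous_const (continuous_const.inner continuous_id)).measurableSet

lemma setIntegral_inner_nonneg (ρ : Measure (Vec d)) (u : Vec d) (t : ℝ) :
    0 ≤ ∫ x in halfSpace u t, (⟪u, x⟫ - t) ∂ρ :=
  setIntegral_nonneg (measurableSet_halfSpace u t) fun x hx => by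
    simp only [halfSpace, Set.mem_setOf_eq] at hx; linarith

lemma gTilde_nonneg (ρ : Measure (Vec d)) (u : Vec d) (t : ℝ) : 0 ≤ gTilde ρ u t :=
  mul_nonneg (mul_nonneg (sq_nonneg _)
    (div_nonneg (setIntegral_inner_nonneg ρ u t) ENNReal.toReal_nonneg)) (Real.sqrt_nonneg _)

lemma gWeight_nonneg (ρ : Measure (Vec d)) (u : Vec d) (t : ℝ) : 0 ≤ gWeight ρ u t :=
  le_min (gTilde_nonneg ρ u t) (gTilde_nonneg ρ (-u) (-t))

lemma ae_norm_le_one {ρ : Measure (Vec d)} (h : ρ (Metric.closedBall 0 1)ᶜ = 0) :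
    ∀ᵐ x ∂ρ, ‖x‖ ≤ 1 := by
  rw [MeasureTheory.ae_iff]
  refine measure_mono_null (fun x hx => ?_) h
  simp only [Set.mem_setOf_eq, not_le] at hx
  simp only [Set.mem_compl_iff, Metric.mem_closedBall, dist_zero_right, not_le]
  exact hx

lemma integrable_inner_sub {ρ : Measure (Vec d)} [IsFiniteMeasure ρ]
    (h : ∀ᵐ x ∂ρ, ‖x‖ ≤ 1) (u : Vec d) (t : ℝ) (s : Set (Vec d)) :
    Integrable (fun x => ⟪u, x⟫ - t) (ρ.restrict s) := by
  refine (integrable_const (‖u‖ + |t|)).mono'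
    ((continuous_const.inner continuous_id).sub continuous_const).aestronglyMeasurable ?_
  filter_upwards [ae_restrict_of_ae h] with x hx
  have h1 : |⟪u, x⟫| ≤ ‖u‖ := by
    calc |⟪u, x⟫| ≤ ‖u‖ * ‖x‖ := abs_real_inner_le_norm u x
    _ ≤ ‖u‖ * 1 := mul_le_mul_of_nonneg_left hx (norm_nonneg u)
    _ = ‖u‖ := mul_one _
  have h2 := abs_add_le ⟪u, x⟫ (-t)
  rw [Real.norm_eq_abs]
  rw [abs_neg] at h2
  calc |⟪u, x⟫ - t| = |⟪u, x⟫ + -t| := by ring_nf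
  _ ≤ |⟪u, x⟫| + |t| := h2
  _ ≤ ‖u‖ + |t| := by linarith

lemma integrable_id_restrict {ρ : Measure (Vec d)} [IsFiniteMeasure ρ]
    (h : ∀ᵐ x ∂ρ, ‖x‖ ≤ 1) (s : Set (Vec d)) :
    Integrable (fun x : Vec d => x) (ρ.restrict s) :=
  (integrable_const 1).mono' continuous_id.aestronglyMeasurable (ae_restrict_of_ae h)

/-- Lower bound: `gTilde ρ u t ≥ P * I`. -/
lemma le_gTilde (ρ : Measure (Vec d)) (u : Vec d) (t : ℝ) :
    (ρ (halfSpace u t)).toReal * (∫ x in halfSpace u t, (⟪u, x⟫ - t) ∂ρ) ≤ gTilde ρ u t := by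
  set P := (ρ (halfSpace u t)).toReal with hPdef
  set I := ∫ x in halfSpace u t, (⟪u, x⟫ - t) ∂ρ with hIdef
  have hI0 : 0 ≤ I := setIntegral_inner_nonneg ρ u t
  by_cases hP : P = 0
  · rw [hP, zero_mul]; exact gTilde_nonneg ρ u t
  · have hP0 : 0 < P := lt_of_le_of_ne ENNReal.toReal_nonneg (Ne.symm hP)
    unfold gTilde
    rw [← hPdef, ← hIdef]
    have heq : P ^ 2 * (I / P) = P * I := by field_simp
    rw [heq]
    have hS : 1 ≤ Real.sqrt (1 + ‖P⁻¹ • ∫ x in halfSpace u t, x ∂ρ‖ ^ 2) := by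
      have h1 : (1 : ℝ) ≤ 1 + ‖P⁻¹ • ∫ x in halfSpace u t, x ∂ρ‖ ^ 2 :=
        le_add_of_nonneg_right (by positivity)
      have := Real.sqrt_le_sqrt h1
      simpa using this
    calc P * I = P * I * 1 := (mul_one _).symm
    _ ≤ P * I * Real.sqrt (1 + ‖P⁻¹ • ∫ x in halfSpace u t, x ∂ρ‖ ^ 2) :=
      mul_le_mul_of_nonneg_left hS (mul_nonneg hP0.le hI0)

/-- Upper bound: `gTilde ρ u t ≤ √2 * (P * I)` for measures supported in the unit ball. -/
lemma gTilde_le (ρ : Measure (Vec d)) [IsFiniteMeasure ρ]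
    (hρ : ρ (Metric.closedBall 0 1)ᶜ = 0) (u : Vec d) (t : ℝ) :
    gTilde ρ u t ≤ Real.sqrt 2 *
      ((ρ (halfSpace u t)).toReal * ∫ x in halfSpace u t, (⟪u, x⟫ - t) ∂ρ) := by
  have hae := ae_norm_le_one hρ
  set P := (ρ (halfSpace u t)).toReal with hPdef
  set I := ∫ x in halfSpace u t, (⟪u, x⟫ - t) ∂ρ with hIdef
  have hI0 : 0 ≤ I := setIntegral_inner_nonneg ρ u t
  by_cases hP : P = 0
  · unfold gTilde
    rw [← hPdef, hP]
    simp
  · have hP0 : 0 < P := lt_of_le_of_ne ENNReal.toReal_nonneg (Ne.symm hP)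
    unfold gTilde
    rw [← hPdef, ← hIdef]
    have heq : P ^ 2 * (I / P) = P * I := by field_simp
    rw [heq]
    have hnorm : ‖P⁻¹ • ∫ x in halfSpace u t, x ∂ρ‖ ≤ 1 := by
      have hint : ‖∫ x in halfSpace u t, x ∂ρ‖ ≤ P := by
        calc ‖∫ x in halfSpace u t, x ∂ρ‖ ≤ ∫ x in halfSpace u t, ‖x‖ ∂ρ :=
          norm_integral_le_integral_norm _
        _ ≤ ∫ _x in halfSpace u t, (1 : ℝ) ∂ρ :=
          integral_mono_ae ((integrable_id_restrict hae _).norm) (integrable_const 1)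
            (ae_restrict_of_ae hae)
        _ = P := by simp [hPdef, measureReal_def]
      rw [norm_smul, norm_inv, Real.norm_eq_abs, abs_of_pos hP0]
      rw [inv_mul_le_iff₀ hP0, mul_one]
      exact hint
    have hS : Real.sqrt (1 + ‖P⁻¹ • ∫ x in halfSpace u t, x ∂ρ‖ ^ 2) ≤ Real.sqrt 2 := by
      apply Real.sqrt_le_sqrt
      nlinarith [norm_nonneg (P⁻¹ • ∫ x in halfSpace u t, x ∂ρ)]
    calc P * I * Real.sqrt (1 + ‖P⁻¹ • ∫ x in halfSpace u t, x ∂ρ‖ ^ 2)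
        ≤ P * I * Real.sqrt 2 := mul_le_mul_of_nonneg_left hS (mul_nonneg hP0.le hI0)
    _ = Real.sqrt 2 * (P * I) := by ring

end Statement7Aux

section Statement7Meas

variable {d : ℕ}

lemma measurableSet_pairHalf :
    MeasurableSet {qx : (Vec d × ℝ) × Vec d | qx.1.2 < ⟪qx.1.1, qx.2⟫} := by
  have hc : Continuous fun qx : (Vec d × ℝ) × Vec d => ⟪qx.1.1, qx.2⟫ :=
    (continuous_fst.fst).inner continuous_snd
  exact (isOpen_lt (continuous_fst.snd) hc).measurableSet

set_option maxHeartbeats 1000000 in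
lemma measurable_gTilde_pair (ρ : Measure (Vec d)) [IsFiniteMeasure ρ] :
    Measurable fun q : Vec d × ℝ => gTilde ρ q.1 q.2 := by
  have hs := measurableSet_pairHalf (d := d)
  have hpre : ∀ q : Vec d × ℝ,
      Prod.mk q ⁻¹' {qx : (Vec d × ℝ) × Vec d | qx.1.2 < ⟪qx.1.1, qx.2⟫} = halfSpace q.1 q.2 :=
    fun q => rfl
  have mA : Measurable fun q : Vec d × ℝ => (ρ (halfSpace q.1 q.2)).toReal := by
    have := (measurable_measure_prodMk_left (ν := ρ) hs).ennreal_toReal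
    simpa only [hpre] using this
  -- inner-integral measurability
  have hF : StronglyMeasurable fun qx : (Vec d × ℝ) × Vec d =>
      Set.indicator (halfSpace qx.1.1 qx.1.2) (fun x => ⟪qx.1.1, x⟫ - qx.1.2) qx.2 := by
    have : (fun qx : (Vec d × ℝ) × Vec d =>
        Set.indicator (halfSpace qx.1.1 qx.1.2) (fun x => ⟪qx.1.1, x⟫ - qx.1.2) qx.2) =
        fun qx : (Vec d × ℝ) × Vec d =>
          if qx.1.2 < ⟪qx.1.1, qx.2⟫ then ⟪qx.1.1, qx.2⟫ - qx.1.2 else 0 := by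
      funext qx
      simp [Set.indicator_apply, halfSpace]
    rw [this]
    exact (Measurable.ite hs
      (((continuous_fst.fst).inner continuous_snd).sub continuous_fst.snd).measurable
      measurable_const).stronglyMeasurable
  have mB : Measurable fun q : Vec d × ℝ =>
      ∫ x in halfSpace q.1 q.2, (⟪q.1, x⟫ - q.2) ∂ρ := by
    have := hF.integral_prod_right' (ν := ρ)
    have heq : (fun q : Vec d × ℝ => ∫ x in halfSpace q.1 q.2, (⟪q.1, x⟫ - q.2) ∂ρ) =
        fun q : Vec d × ℝ =>
          ∫ x, Set.indicator (halfSpace q.1 q.2) (fun x => ⟪q.1, x⟫ - q.2) x ∂ρ := by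
      funext q
      rw [integral_indicator (measurableSet_halfSpace q.1 q.2)]
    rw [heq]
    exact this.measurable
  have hG : StronglyMeasurable fun qx : (Vec d × ℝ) × Vec d =>
      Set.indicator (halfSpace qx.1.1 qx.1.2) (fun x => x) qx.2 := by
    have : (fun qx : (Vec d × ℝ) × Vec d =>
        Set.indicator (halfSpace qx.1.1 qx.1.2) (fun x => x) qx.2) =
        fun qx : (Vec d × ℝ) × Vec d =>
          if qx.1.2 < ⟪qx.1.1, qx.2⟫ then qx.2 else 0 := by
      funext qx
      simp [Set.indicator_apply, halfSpace]
    rw [this]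
    exact (Measurable.ite hs measurable_snd measurable_const).stronglyMeasurable
  have mC : Measurable fun q : Vec d × ℝ => ∫ x in halfSpace q.1 q.2, x ∂ρ := by
    have := hG.integral_prod_right' (ν := ρ)
    have heq : (fun q : Vec d × ℝ => ∫ x in halfSpace q.1 q.2, x ∂ρ) =
        fun q : Vec d × ℝ =>
          ∫ x, Set.indicator (halfSpace q.1 q.2) (fun x => x) x ∂ρ := by
      funext q
      rw [integral_indicator (measurableSet_halfSpace q.1 q.2)]
    rw [heq]
    exact this.measurable
  have m1 : Measurable fun q : Vec d × ℝ =>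
      (ρ (halfSpace q.1 q.2)).toReal⁻¹ • ∫ x in halfSpace q.1 q.2, x ∂ρ := mA.inv.smul mC
  have m2 : Measurable fun q : Vec d × ℝ =>
      ‖(ρ (halfSpace q.1 q.2)).toReal⁻¹ • ∫ x in halfSpace q.1 q.2, x ∂ρ‖ ^ 2 :=
    m1.norm.pow_const 2
  have m3 : Measurable fun q : Vec d × ℝ =>
      Real.sqrt (1 + ‖(ρ (halfSpace q.1 q.2)).toReal⁻¹ • ∫ x in halfSpace q.1 q.2, x ∂ρ‖ ^ 2) :=
    (measurable_const.add m2).sqrt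
  exact ((mA.pow_const 2).mul (mB.div mA)).mul m3

set_option maxHeartbeats 1000000 in
lemma measurable_gWeight_pair (ρ : Measure (Vec d)) [IsFiniteMeasure ρ] :
    Measurable fun q : Vec d × ℝ => gWeight ρ q.1 q.2 := by
  have h1 := measurable_gTilde_pair ρ
  have hn : Measurable fun q : Vec d × ℝ => ((-q.1, -q.2) : Vec d × ℝ) :=
    (measurable_fst.neg).prodMk (measurable_snd.neg)
  have h2 := h1.comp hn
  exact h1.min h2

end Statement7Meas

section Statement7Bound

variable {d : ℕ}

lemma ae_mem_of_null_compl {α : Type*} [MeasurableSpace α] {ν : Measure α} {s : Set α}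
    (h : ν sᶜ = 0) : ∀ᵐ q ∂ν, q ∈ s := by
  rw [MeasureTheory.ae_iff]
  exact measure_mono_null (fun x hx => hx) h

lemma gWeight_le_bound {ρ : Measure (Vec d)} [IsProbabilityMeasure ρ]
    (hρ : ρ (Metric.closedBall 0 1)ᶜ = 0) {u : Vec d} {t : ℝ}
    (hu : ‖u‖ ≤ 1) (ht : |t| ≤ 1) : gWeight ρ u t ≤ 2 * Real.sqrt 2 := by
  have hae := ae_norm_le_one hρ
  have hw : gWeight ρ u t ≤ gTilde ρ u t := min_le_left _ _
  refine hw.trans ((gTilde_le ρ hρ u t).trans ?_)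
  set P := (ρ (halfSpace u t)).toReal with hPdef
  set I := ∫ x in halfSpace u t, (⟪u, x⟫ - t) ∂ρ with hIdef
  have hI0 : 0 ≤ I := setIntegral_inner_nonneg ρ u t
  have hP0 : 0 ≤ P := ENNReal.toReal_nonneg
  have hP1 : P ≤ 1 := by
    have h2 := ENNReal.toReal_mono (measure_ne_top ρ Set.univ)
      (measure_mono (Set.subset_univ (halfSpace u t)))
    rwa [measure_univ, ENNReal.toReal_one] at h2
  have hI2 : I ≤ 2 := by
    have hmono : I ≤ ∫ _x in halfSpace u t, (2 : ℝ) ∂ρ := by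
      refine integral_mono_ae (integrable_inner_sub hae u t _) (integrable_const 2) ?_
      filter_upwards [ae_restrict_of_ae hae] with x hx
      have h1 : |⟪u, x⟫| ≤ ‖u‖ * ‖x‖ := abs_real_inner_le_norm u x
      have h2 : ‖u‖ * ‖x‖ ≤ 1 := mul_le_one₀ hu (norm_nonneg x) hx
      have h3 := le_abs_self ⟪u, x⟫
      have h4 := neg_le_of_abs_le ht
      show ⟪u, x⟫ - t ≤ 2
      linarith
    have hconst : ∫ _x in halfSpace u t, (2 : ℝ) ∂ρ = P * 2 := by
      rw [setIntegral_const, smul_eq_mul, measureReal_def]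
    rw [hconst] at hmono
    nlinarith
  have hPI : P * I ≤ 2 := by nlinarith
  have := mul_le_mul_of_nonneg_left hPI (Real.sqrt_nonneg 2)
  linarith

lemma integrable_gWeight {ρ : Measure (Vec d)} [IsProbabilityMeasure ρ]
    (hρ : ρ (Metric.closedBall 0 1)ᶜ = 0) {ν : Measure (Vec d × ℝ)} [IsFiniteMeasure ν]
    (hν : ν ((Metric.sphere (0 : Vec d) 1 ×ˢ Set.Icc (-1 : ℝ) 1)ᶜ) = 0) :
    Integrable (fun q : Vec d × ℝ => gWeight ρ q.1 q.2) ν := by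
  refine (integrable_const (2 * Real.sqrt 2)).mono'
    (measurable_gWeight_pair ρ).aestronglyMeasurable ?_
  filter_upwards [ae_mem_of_null_compl hν] with q hq
  have hu : ‖q.1‖ = 1 := mem_sphere_zero_iff_norm.mp hq.1
  have ht : |q.2| ≤ 1 := abs_le.mpr ⟨hq.2.1, hq.2.2⟩
  rw [Real.norm_eq_abs, abs_of_nonneg (gWeight_nonneg ρ q.1 q.2)]
  exact gWeight_le_bound hρ hu.le ht

end Statement7Bound

/-- Lemma F.4: Global-to-local weight domination. For a mixture
`P_X = ∑ p_j P_{X,j}` whose components are supported on the unit discs of affine subspaces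
(hence `‖X‖ ≤ 1` a.s. under each component), the mixture weight function dominates each
component weight function: `g(u,t) ≥ (p_j²/√2) g_j(u,t)` for all `(u,t) ∈ S^{d-1} × ℝ`.
Consequently `F_g(B_1^{V_j}; M, C) ⊆ F_{g_j}(B_1^{V_j}; M, √2 C / p_j²)`. -/
theorem statement7 (d J : ℕ) (hd : 1 < d) (hJ : 1 ≤ J)
    (V : Fin J → AffineSubspace ℝ (Vec d))
    (μs : Fin J → Measure (Vec d)) (hprob : ∀ j, IsProbabilityMeasure (μs j))
    (hsupp : ∀ j, μs j (((V j : Set (Vec d)) ∩ Metric.closedBall 0 1)ᶜ) = 0)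
    (p : Fin J → ℝ) (hp : ∀ j, 0 < p j) (hsum : ∑ j, p j = 1)
    (μ : Measure (Vec d)) (hμ : μ = ∑ j, ENNReal.ofReal (p j) • μs j) :
    (∀ (j : Fin J) (u : Vec d), ‖u‖ = 1 → ∀ t : ℝ,
      (p j ^ 2 / Real.sqrt 2) * gWeight (μs j) u t ≤ gWeight μ u t) ∧
    (∀ (j : Fin J) (M C : ℝ), 0 < M → 0 < C →
      ∀ f : Vec d → ℝ,
        VgMem (gWeight μ) ((V j : Set (Vec d)) ∩ Metric.closedBall 0 1) M C f →
        VgMem (gWeight (μs j)) ((V j : Set (Vec d)) ∩ Metric.closedBall 0 1) M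
          (Real.sqrt 2 * C / p j ^ 2) f) := by
  have hsqrt2 : (0 : ℝ) < Real.sqrt 2 := by positivity
  -- basic facts about the mixture
  have hunivμ : μ Set.univ = 1 := by
    rw [hμ, Measure.finset_sum_apply]
    have h1 : ∀ j : Fin J, (ENNReal.ofReal (p j) • μs j) Set.univ = ENNReal.ofReal (p j) := by
      intro j
      rw [Measure.smul_apply, (hprob j).measure_univ, smul_eq_mul, mul_one]
    rw [Finset.sum_congr rfl fun j _ => h1 j,
      ← ENNReal.ofReal_sum_of_nonneg fun j _ => (hp j).le, hsum, ENNReal.ofReal_one]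
  haveI hprobμ : IsProbabilityMeasure μ := ⟨hunivμ⟩
  have hnullj : ∀ j, μs j (Metric.closedBall (0 : Vec d) 1)ᶜ = 0 := fun j =>
    measure_mono_null (Set.compl_subset_compl.mpr Set.inter_subset_right) (hsupp j)
  have hnullμ : μ (Metric.closedBall (0 : Vec d) 1)ᶜ = 0 := by
    rw [hμ, Measure.finset_sum_apply]
    refine Finset.sum_eq_zero fun j _ => ?_
    rw [Measure.smul_apply, hnullj j, smul_eq_mul, mul_zero]
  -- measure domination
  have hPle : ∀ (s : Set (Vec d)) (j : Fin J), p j * ((μs j) s).toReal ≤ (μ s).toReal := by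
    intro s j
    have h1 : ENNReal.ofReal (p j) * μs j s ≤ μ s := by
      rw [hμ, Measure.finset_sum_apply]
      have := Finset.single_le_sum (f := fun k => (ENNReal.ofReal (p k) • μs k) s)
        (fun k _ => zero_le) (Finset.mem_univ j)
      simpa [Measure.smul_apply, smul_eq_mul] using this
    have h2 : (ENNReal.ofReal (p j) * μs j s).toReal = p j * (μs j s).toReal := by
      rw [ENNReal.toReal_mul, ENNReal.toReal_ofReal (hp j).le]
    rw [← h2]
    exact ENNReal.toReal_mono (measure_ne_top μ s) h1
  -- integral domination
  have hIle : ∀ (u : Vec d) (t : ℝ) (j : Fin J),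
      p j * (∫ x in halfSpace u t, (⟪u, x⟫ - t) ∂μs j)
        ≤ ∫ x in halfSpace u t, (⟪u, x⟫ - t) ∂μ := by
    intro u t j
    have hres : μ.restrict (halfSpace u t)
        = ∑ k, ENNReal.ofReal (p k) • (μs k).restrict (halfSpace u t) := by
      ext s hs
      rw [Measure.restrict_apply hs, hμ, Measure.finset_sum_apply, Measure.finset_sum_apply]
      refine Finset.sum_congr rfl fun k _ => ?_
      simp [Measure.smul_apply, Measure.restrict_apply hs]
    have hint : ∀ k : Fin J, Integrable (fun x => ⟪u, x⟫ - t)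
        (ENNReal.ofReal (p k) • (μs k).restrict (halfSpace u t)) := by
      intro k
      haveI := hprob k
      exact (integrable_inner_sub (ae_norm_le_one (hnullj k)) u t _).smul_measure
        ENNReal.ofReal_ne_top
    have heq : ∫ x in halfSpace u t, (⟪u, x⟫ - t) ∂μ
        = ∑ k, p k * ∫ x in halfSpace u t, (⟪u, x⟫ - t) ∂μs k := by
      rw [hres, integral_finset_sum_measure fun k _ => hint k]
      refine Finset.sum_congr rfl fun k _ => ?_
      rw [integral_smul_measure, ENNReal.toReal_ofReal (hp k).le, smul_eq_mul]
    rw [heq]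
    exact Finset.single_le_sum
      (f := fun k => p k * ∫ x in halfSpace u t, (⟪u, x⟫ - t) ∂μs k)
      (fun k _ => mul_nonneg (hp k).le (setIntegral_inner_nonneg _ u t)) (Finset.mem_univ j)
  -- gTilde domination
  have keyT : ∀ (j : Fin J) (u : Vec d) (t : ℝ),
      (p j ^ 2 / Real.sqrt 2) * gTilde (μs j) u t ≤ gTilde μ u t := by
    intro j u t
    haveI := hprob j
    have hPj0 : (0 : ℝ) ≤ ((μs j) (halfSpace u t)).toReal := ENNReal.toReal_nonneg
    have hIj0 : 0 ≤ ∫ x in halfSpace u t, (⟪u, x⟫ - t) ∂μs j :=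
      setIntegral_inner_nonneg _ u t
    have h1 : gTilde (μs j) u t ≤ Real.sqrt 2 *
        (((μs j) (halfSpace u t)).toReal * ∫ x in halfSpace u t, (⟪u, x⟫ - t) ∂μs j) :=
      gTilde_le _ (hnullj j) u t
    have h2 := le_gTilde μ u t
    have h3 : (p j * ((μs j) (halfSpace u t)).toReal)
          * (p j * ∫ x in halfSpace u t, (⟪u, x⟫ - t) ∂μs j)
        ≤ (μ (halfSpace u t)).toReal * ∫ x in halfSpace u t, (⟪u, x⟫ - t) ∂μ :=
      mul_le_mul (hPle _ j) (hIle u t j) (mul_nonneg (hp j).le hIj0) ENNReal.toReal_nonneg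
    calc (p j ^ 2 / Real.sqrt 2) * gTilde (μs j) u t
        ≤ (p j ^ 2 / Real.sqrt 2) * (Real.sqrt 2 *
            (((μs j) (halfSpace u t)).toReal * ∫ x in halfSpace u t, (⟪u, x⟫ - t) ∂μs j)) :=
          mul_le_mul_of_nonneg_left h1 (by positivity)
      _ = (p j * ((μs j) (halfSpace u t)).toReal)
            * (p j * ∫ x in halfSpace u t, (⟪u, x⟫ - t) ∂μs j) := by
          field_simp
      _ ≤ _ := h3.trans h2
  -- part 1
  have hdom : ∀ (j : Fin J) (u : Vec d), ‖u‖ = 1 → ∀ t : ℝ,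
      (p j ^ 2 / Real.sqrt 2) * gWeight (μs j) u t ≤ gWeight μ u t := by
    intro j u hu t
    have hc : (0 : ℝ) ≤ p j ^ 2 / Real.sqrt 2 := by positivity
    have hw1 : gWeight (μs j) u t ≤ gTilde (μs j) u t := min_le_left _ _
    have hw2 : gWeight (μs j) u t ≤ gTilde (μs j) (-u) (-t) := min_le_right _ _
    refine le_min ?_ ?_
    · exact le_trans (mul_le_mul_of_nonneg_left hw1 hc) (keyT j u t)
    · exact le_trans (mul_le_mul_of_nonneg_left hw2 hc) (keyT j (-u) (-t))
  refine ⟨hdom, ?_⟩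
  -- part 2
  intro j M C hM hC f hf
  obtain ⟨hbd, νp, νm, hfp, hfm, hsp, hsm, hrepr, hvar⟩ := hf
  haveI := hfp; haveI := hfm; haveI := hprob j
  refine ⟨hbd, νp, νm, hfp, hfm, hsp, hsm, hrepr, ?_⟩
  have hptw : ∀ (ν : Measure (Vec d × ℝ)),
      ν ((Metric.sphere (0 : Vec d) 1 ×ˢ Set.Icc (-1 : ℝ) 1)ᶜ) = 0 →
      ∀ᵐ q ∂ν, gWeight (μs j) q.1 q.2 ≤ (Real.sqrt 2 / p j ^ 2) * gWeight μ q.1 q.2 := by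
    intro ν hν
    filter_upwards [ae_mem_of_null_compl hν] with q hq
    have hu : ‖q.1‖ = 1 := mem_sphere_zero_iff_norm.mp hq.1
    have h := hdom j q.1 hu q.2
    have hcc : (Real.sqrt 2 / p j ^ 2) * (p j ^ 2 / Real.sqrt 2) = 1 := by
      rw [div_mul_div_comm, mul_comm, div_self (mul_pos (pow_pos (hp j) 2) hsqrt2).ne']
    calc gWeight (μs j) q.1 q.2
        = (Real.sqrt 2 / p j ^ 2) * ((p j ^ 2 / Real.sqrt 2) * gWeight (μs j) q.1 q.2) := by
          rw [← mul_assoc, hcc, one_mul]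
      _ ≤ (Real.sqrt 2 / p j ^ 2) * gWeight μ q.1 q.2 :=
          mul_le_mul_of_nonneg_left h (by positivity)
  have hintp : Integrable (fun q : Vec d × ℝ => gWeight (μs j) q.1 q.2) νp :=
    integrable_gWeight (hnullj j) hsp
  have hintm : Integrable (fun q : Vec d × ℝ => gWeight (μs j) q.1 q.2) νm :=
    integrable_gWeight (hnullj j) hsm
  have hintpμ : Integrable (fun q : Vec d × ℝ => gWeight μ q.1 q.2) νp :=
    integrable_gWeight hnullμ hsp
  have hintmμ : Integrable (fun q : Vec d × ℝ => gWeight μ q.1 q.2) νm :=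
    integrable_gWeight hnullμ hsm
  have h1 : ∫ q, gWeight (μs j) q.1 q.2 ∂νp
      ≤ (Real.sqrt 2 / p j ^ 2) * ∫ q, gWeight μ q.1 q.2 ∂νp := by
    rw [← integral_const_mul]
    exact integral_mono_ae hintp (hintpμ.const_mul _) (hptw νp hsp)
  have h2 : ∫ q, gWeight (μs j) q.1 q.2 ∂νm
      ≤ (Real.sqrt 2 / p j ^ 2) * ∫ q, gWeight μ q.1 q.2 ∂νm := by
    rw [← integral_const_mul]
    exact integral_mono_ae hintm (hintmμ.const_mul _) (hptw νm hsm)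
  have h3 : (Real.sqrt 2 / p j ^ 2) *
      ((∫ q, gWeight μ q.1 q.2 ∂νp) + ∫ q, gWeight μ q.1 q.2 ∂νm)
      ≤ (Real.sqrt 2 / p j ^ 2) * C := mul_le_mul_of_nonneg_left hvar (by positivity)
  have h4 : (Real.sqrt 2 / p j ^ 2) * C = Real.sqrt 2 * C / p j ^ 2 := by ring
  nlinarith [h1, h2, h3]

end
end

section
/- Let X ~ P_X(alpha) on R^d with d > 1, let X_d = X^T e_d, Q(t) = P(X_d > t), E(t) = E[X_d | X_d > t], and define g_alpha^+(t) = Q(t)^2 * (E(t) - t) * sqrt(1 + E(t)^2). Then there exist t_0 in [0,1) and positive constants c_L(alpha, d) and c_U(alpha, d) such that for all t in [t_0, 1): c_L(alpha, d) * (1 - t)^{2 alpha + d} <= g_alpha^+(t) <= c_U(alpha, d) * (1 - t)^{2 alpha + d}. -/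
open MeasureTheory
open scoped ENNReal RealInnerProductSpace NNReal

noncomputable section

/-- The conditional expectation `E[X_i | X_i > t]` of a coordinate projection of `μ`. -/
def condCoordMean {d : ℕ} (μ : Measure (Vec d)) (i : Fin d) (t : ℝ) : ℝ :=
  (∫ x in {x : Vec d | t < x i}, x i ∂μ) / (μ {x : Vec d | t < x i}).toReal

/-- The directional weight function `g_α^+(t) = Q(t)² (E(t) - t) √(1 + E(t)²)` of `P_X(α)`
in a coordinate direction, where `Q(t) = P(X_i > t)` and `E(t) = E[X_i | X_i > t]`. -/
def gAlphaPlus (d : ℕ) (α : ℝ) (i : Fin d) (t : ℝ) : ℝ :=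
  (alphaRadial d α {x | t < x i}).toReal ^ 2 *
    (condCoordMean (alphaRadial d α) i t - t) *
    Real.sqrt (1 + condCoordMean (alphaRadial d α) i t ^ 2)


section AuxStatement12
open Set Metric

namespace S12

variable {n : ℕ}

abbrev E (n : ℕ) : Type := EuclideanSpace ℝ (Fin n)

/-- insert a coordinate -/
def ins (i : Fin (n+1)) (c : ℝ) (y : E n) : E (n+1) := WithLp.toLp 2 (i.insertNth (α := fun _ => ℝ) c (WithLp.ofLp y))

/-- remove a coordinate -/
def rem (i : Fin (n+1)) (x : E (n+1)) : E n := WithLp.toLp 2 (fun k => x (i.succAbove k))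

lemma ins_apply_same (i : Fin (n+1)) (c : ℝ) (y : E n) : ins i c y i = c :=
  Fin.insertNth_apply_same (α := fun _ => ℝ) i c y

lemma ins_apply_succAbove (i : Fin (n+1)) (c : ℝ) (y : E n) (k : Fin n) :
    ins i c y (i.succAbove k) = y k := Fin.insertNth_apply_succAbove (α := fun _ => ℝ) i c y k

lemma norm_sq_eq (x : E n) : ‖x‖ ^ 2 = ∑ j, (x j) ^ 2 := by
  rw [EuclideanSpace.norm_eq, Real.sq_sqrt (by positivity)]
  simp [Real.norm_eq_abs, sq_abs]

lemma norm_sq_ins (i : Fin (n+1)) (c : ℝ) (y : E n) :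
    ‖ins i c y‖ ^ 2 = c ^ 2 + ‖y‖ ^ 2 := by
  rw [norm_sq_eq, norm_sq_eq, Fin.sum_univ_succAbove (fun j => (ins i c y j) ^ 2) i]
  simp [ins_apply_same, ins_apply_succAbove]

lemma ins_sub_ins (i : Fin (n+1)) (c c' : ℝ) (y y' : E n) :
    ins i c y - ins i c' y' = ins i (c - c') (y - y') := by
  ext j
  rcases eq_or_ne j i with h | h
  · subst h
    show ins j c y j - ins j c' y' j = ins j (c - c') (y - y') j
    simp [ins_apply_same]
  · obtain ⟨k, rfl⟩ := Fin.exists_succAbove_eq h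
    show ins i c y _ - ins i c' y' _ = ins i (c - c') (y - y') _
    simp only [ins_apply_succAbove]
    rfl

lemma rem_sub (i : Fin (n+1)) (x x' : E (n+1)) : rem i x - rem i x' = rem i (x - x') := by ext k; rfl

lemma norm_rem_le (i : Fin (n+1)) (x : E (n+1)) : ‖rem i x‖ ≤ ‖x‖ := by
  have h1 : ‖rem i x‖ ^ 2 ≤ ‖x‖ ^ 2 := by
    rw [norm_sq_eq, norm_sq_eq, Fin.sum_univ_succAbove (fun j => (x j) ^ 2) i]
    have : (0:ℝ) ≤ x i ^ 2 := sq_nonneg _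
    simp only [rem]
    linarith
  nlinarith [norm_nonneg (rem i x), norm_nonneg x]

end S12

namespace S12b
open S12

variable {n : ℕ}

/-- height function -/
def ht (y : E n) : ℝ := Real.sqrt (1 - ‖y‖ ^ 2)

lemma sqrt_height_lip {a b ρ : ℝ} (ha : |a| ≤ ρ) (hb : |b| ≤ ρ) (hρ : ρ < 1) :
    |Real.sqrt (1 - a ^ 2) - Real.sqrt (1 - b ^ 2)| ≤
      ρ / Real.sqrt (1 - ρ ^ 2) * |a - b| := by
  have hρ0 : 0 ≤ ρ := (abs_nonneg a).trans ha
  set s := Real.sqrt (1 - ρ ^ 2) with hs_def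
  have hs : 0 < s := Real.sqrt_pos.2 (by nlinarith)
  set A := Real.sqrt (1 - a ^ 2) with hA_def
  set B := Real.sqrt (1 - b ^ 2) with hB_def
  have ha2 : a ^ 2 ≤ ρ ^ 2 := by nlinarith [sq_abs a, abs_nonneg a]
  have hb2 : b ^ 2 ≤ ρ ^ 2 := by nlinarith [sq_abs b, abs_nonneg b]
  have hA2 : A ^ 2 = 1 - a ^ 2 := Real.sq_sqrt (by nlinarith)
  have hB2 : B ^ 2 = 1 - b ^ 2 := Real.sq_sqrt (by nlinarith)
  have hsA : s ≤ A := Real.sqrt_le_sqrt (by nlinarith)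
  have hsB : s ≤ B := Real.sqrt_le_sqrt (by nlinarith)
  have key : |A - B| * (A + B) = |b ^ 2 - a ^ 2| := by
    have h0 : (0:ℝ) ≤ A + B := by positivity
    rw [← abs_of_nonneg h0, ← abs_mul]
    have : (A - B) * (A + B) = b ^ 2 - a ^ 2 := by ring_nf; nlinarith [hA2, hB2]
    rw [this]
  have h2 : |b ^ 2 - a ^ 2| ≤ 2 * ρ * |a - b| := by
    have : |b ^ 2 - a ^ 2| = |a - b| * |b + a| := by
      rw [abs_sub_comm a b, ← abs_mul]
      congr 1
      ring
    rw [this]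
    have hba : |b + a| ≤ 2 * ρ := (abs_add_le b a).trans (by linarith)
    calc |a - b| * |b + a| ≤ |a - b| * (2 * ρ) :=
          mul_le_mul_of_nonneg_left hba (abs_nonneg _)
      _ = 2 * ρ * |a - b| := by ring
  rw [div_mul_eq_mul_div, le_div_iff₀ hs]
  nlinarith [abs_nonneg (A - B), key, h2]

lemma ht_lip {ρ : ℝ} (hρ : ρ < 1) {y y' : E n}
    (hy : ‖y‖ ≤ ρ) (hy' : ‖y'‖ ≤ ρ) :
    |ht y - ht y'| ≤ ρ / Real.sqrt (1 - ρ ^ 2) * ‖y - y'‖ := by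
  have h1 := sqrt_height_lip (a := ‖y‖) (b := ‖y'‖) (ρ := ρ)
    (by rwa [abs_of_nonneg (norm_nonneg _)]) (by rwa [abs_of_nonneg (norm_nonneg _)]) hρ
  have h2 : |‖y‖ - ‖y'‖| ≤ ‖y - y'‖ := abs_norm_sub_norm_le y y'
  have h3 : (0:ℝ) ≤ ρ / Real.sqrt (1 - ρ ^ 2) := by
    have : 0 ≤ ρ := (abs_nonneg ‖y‖).trans (by rwa [abs_of_nonneg (norm_nonneg _)])
    positivity
  exact h1.trans (mul_le_mul_of_nonneg_left h2 h3)

/-- the graph parametrization -/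
def ψ (i : Fin (n+1)) (ε : ℝ) (y : E n) : E (n+1) := ins i (ε * ht y) y

lemma psi_lipschitzOn (i : Fin (n+1)) {ε : ℝ} (hε : ε = 1 ∨ ε = -1) {ρ : ℝ} (hρ : ρ < 1)
    (hρ0 : 0 ≤ ρ) :
    LipschitzOnWith (Real.toNNReal (Real.sqrt (1 + (ρ / Real.sqrt (1 - ρ ^ 2)) ^ 2)))
      (ψ i ε) (closedBall (0 : E n) ρ) := by
  rw [lipschitzOnWith_iff_dist_le_mul]
  intro y hy y' hy'
  rw [mem_closedBall, dist_zero_right] at hy hy'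
  set c := ρ / Real.sqrt (1 - ρ ^ 2) with hc_def
  have hc0 : 0 ≤ c := by
    have hs : 0 < Real.sqrt (1 - ρ ^ 2) := Real.sqrt_pos.2 (by nlinarith)
    positivity
  have hL0 : (0:ℝ) ≤ Real.sqrt (1 + c ^ 2) := Real.sqrt_nonneg _
  rw [Real.coe_toNNReal _ hL0]
  rw [dist_eq_norm, dist_eq_norm]
  have hsub : ψ i ε y - ψ i ε y' = ins i (ε * ht y - ε * ht y') (y - y') := by
    rw [ψ, ψ, ins_sub_ins]
  have hnormsq : ‖ψ i ε y - ψ i ε y'‖ ^ 2 = (ε * ht y - ε * ht y') ^ 2 + ‖y - y'‖ ^ 2 := by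
    rw [hsub, norm_sq_ins]
  have hε2 : ε ^ 2 = 1 := by rcases hε with h | h <;> simp [h]
  have hht : |ht y - ht y'| ≤ c * ‖y - y'‖ := ht_lip hρ hy hy'
  have h4 : (ε * ht y - ε * ht y') ^ 2 ≤ c ^ 2 * ‖y - y'‖ ^ 2 := by
    have : (ε * ht y - ε * ht y') ^ 2 = ε ^ 2 * (ht y - ht y') ^ 2 := by ring
    rw [this, hε2, one_mul]
    have := abs_nonneg (ht y - ht y')
    nlinarith [sq_abs (ht y - ht y'), norm_nonneg (y - y'), mul_nonneg hc0 (norm_nonneg (y-y'))]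
  have h5 : ‖ψ i ε y - ψ i ε y'‖ ^ 2 ≤ (1 + c ^ 2) * ‖y - y'‖ ^ 2 := by
    rw [hnormsq]; nlinarith [norm_nonneg (y - y')]
  have h6 : Real.sqrt (1 + c ^ 2) * ‖y - y'‖ = Real.sqrt ((1 + c ^ 2) * ‖y - y'‖ ^ 2) := by
    rw [Real.sqrt_mul (by positivity), Real.sqrt_sq (norm_nonneg _)]
  rw [h6]
  calc ‖ψ i ε y - ψ i ε y'‖ = Real.sqrt (‖ψ i ε y - ψ i ε y'‖ ^ 2) :=
        (Real.sqrt_sq (norm_nonneg _)).symm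
    _ ≤ Real.sqrt ((1 + c ^ 2) * ‖y - y'‖ ^ 2) := Real.sqrt_le_sqrt h5

end S12b


namespace S12c
open S12 S12b

variable {n : ℕ}

lemma rem_psi (i : Fin (n+1)) (ε : ℝ) (y : E n) : rem i (ψ i ε y) = y := by
  ext k
  show ψ i ε y (i.succAbove k) = y k
  exact ins_apply_succAbove i _ y k

lemma cover_subset (j : Fin (n+1)) {ε : ℝ} (hε : ε = 1 ∨ ε = -1) {m : ℝ} (hm : 0 < m)
    (hm1 : m ≤ 1) :
    {u : E (n+1) | ‖u‖ = 1 ∧ m ≤ ε * u j} ⊆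
      ψ j ε '' closedBall (0 : E n) (Real.sqrt (1 - m ^ 2)) := by
  rintro u ⟨hu, hmu⟩
  have hε2 : ε ^ 2 = 1 := by rcases hε with h | h <;> simp [h]
  set y : E n := rem j u with hy_def
  have husq : (u j) ^ 2 + ‖y‖ ^ 2 = 1 := by
    have h1 : ‖u‖ ^ 2 = ∑ k, (u k) ^ 2 := norm_sq_eq u
    rw [hu] at h1
    rw [Fin.sum_univ_succAbove (fun k => (u k) ^ 2) j] at h1
    have h2 : ‖y‖ ^ 2 = ∑ k, (y k) ^ 2 := norm_sq_eq y
    have h3 : ∀ k, y k = u (j.succAbove k) := fun k => rfl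
    simp only [h3] at h2
    rw [h2]; linarith [h1.symm]
  have habs : m ≤ |u j| := by
    rcases hε with h | h
    · rw [h, one_mul] at hmu; exact hmu.trans (le_abs_self _)
    · rw [h] at hmu; have : u j ≤ -m := by linarith
      calc m ≤ -(u j) := by linarith
        _ ≤ |u j| := neg_le_abs _
  have hsq : (u j) ^ 2 ≥ m ^ 2 := by nlinarith [abs_nonneg (u j), sq_abs (u j)]
  have hymem : y ∈ closedBall (0 : E n) (Real.sqrt (1 - m ^ 2)) := by
    rw [mem_closedBall, dist_zero_right]
    have : ‖y‖ ^ 2 ≤ 1 - m ^ 2 := by linarith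
    calc ‖y‖ = Real.sqrt (‖y‖ ^ 2) := (Real.sqrt_sq (norm_nonneg _)).symm
      _ ≤ Real.sqrt (1 - m ^ 2) := Real.sqrt_le_sqrt this
  refine ⟨y, hymem, ?_⟩
  have hht : ht y = |u j| := by
    rw [ht]
    have : 1 - ‖y‖ ^ 2 = (u j) ^ 2 := by linarith
    rw [this, Real.sqrt_sq_eq_abs]
  have hεabs : ε * |u j| = u j := by
    rcases hε with h | h
    · rw [h, one_mul]; rw [h, one_mul] at hmu
      exact abs_of_nonneg (by linarith)
    · rw [h] at hmu ⊢
      have : u j ≤ -m := by linarith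
      rw [abs_of_neg (by linarith)]; ring
  show ins j (ε * ht y) y = u
  rw [hht, hεabs]
  exact congrArg (WithLp.toLp 2) (Fin.insertNth_self_removeNth (α := fun _ => ℝ) j u)

lemma proj_superset (i : Fin (n+1)) {s : ℝ} (h0 : 0 ≤ s) (hs1 : s < 1) :
    ball (0 : E n) (Real.sqrt (1 - s ^ 2)) ⊆
      rem i '' {u : E (n+1) | ‖u‖ = 1 ∧ s < u i} := by
  intro y hy
  rw [mem_ball, dist_zero_right] at hy
  have hy2 : ‖y‖ ^ 2 < 1 - s ^ 2 := by
    have h1 : (0:ℝ) ≤ 1 - s ^ 2 := by nlinarith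
    nlinarith [Real.sq_sqrt h1, Real.sqrt_nonneg (1 - s ^ 2), norm_nonneg y]
  have hy1 : 1 - ‖y‖ ^ 2 > s ^ 2 := by linarith
  refine ⟨ψ i 1 y, ⟨?_, ?_⟩, rem_psi i 1 y⟩
  · have hsq : ‖ψ i 1 y‖ ^ 2 = (1 * ht y) ^ 2 + ‖y‖ ^ 2 := norm_sq_ins i _ y
    have hh : (ht y) ^ 2 = 1 - ‖y‖ ^ 2 := Real.sq_sqrt (by nlinarith [norm_nonneg y])
    have : ‖ψ i 1 y‖ ^ 2 = 1 := by rw [hsq, one_mul, hh]; ring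
    nlinarith [norm_nonneg (ψ i 1 y)]
  · show s < ψ i 1 y i
    have : ψ i 1 y i = ht y := by
      rw [ψ]
      have := ins_apply_same i (1 * ht y) y
      rw [this, one_mul]
    rw [this, ht]
    calc s = Real.sqrt (s ^ 2) := (Real.sqrt_sq h0).symm
      _ < Real.sqrt (1 - ‖y‖ ^ 2) := Real.sqrt_lt_sqrt (by positivity) hy1

lemma rem_lipschitz (i : Fin (n+1)) : LipschitzWith 1 (rem i : E (n+1) → E n) := by
  rw [lipschitzWith_iff_dist_le_mul]
  intro x x'
  rw [dist_eq_norm, dist_eq_norm, NNReal.coe_one, one_mul, rem_sub]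
  exact norm_rem_le i (x - x')

end S12c

namespace S12d
open S12 S12b S12c

variable {n : ℕ}

/-- unit ball measure constant -/
def cB (n : ℕ) : ℝ≥0∞ := μH[(n:ℝ)] (ball (0 : E n) 1)

lemma haarE (n : ℕ) : (μH[(n:ℝ)] : Measure (E n)).IsAddHaarMeasure := by
  have h := MeasureTheory.isAddHaarMeasure_hausdorffMeasure (E := E n)
  simpa [finrank_euclideanSpace_fin] using h

lemma cB_pos (n : ℕ) : 0 < cB n := by
  have := haarE n
  exact measure_ball_pos _ _ one_pos

lemma cB_fin (n : ℕ) : cB n < ∞ := by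
  have := haarE n
  exact measure_ball_lt_top

lemma closedBall_eq {ρ : ℝ} (hρ : 0 ≤ ρ) :
    μH[(n:ℝ)] (closedBall (0 : E n) ρ) = ENNReal.ofReal (ρ ^ n) * cB n := by
  have := haarE n
  have h := Measure.addHaar_closedBall (μ := (μH[(n:ℝ)] : Measure (E n))) 0 hρ
  rwa [finrank_euclideanSpace_fin] at h

lemma graph_bound (j : Fin (n+1)) {ε : ℝ} (hε : ε = 1 ∨ ε = -1) {m : ℝ} (hm : 0 < m)
    (hm1 : m ≤ 1) :
    μH[(n:ℝ)] {u : E (n+1) | ‖u‖ = 1 ∧ m ≤ ε * u j} < ∞ := by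
  set ρ := Real.sqrt (1 - m ^ 2) with hρ_def
  have hρ0 : 0 ≤ ρ := Real.sqrt_nonneg _
  have hρ1 : ρ < 1 := by
    rw [hρ_def, Real.sqrt_lt' one_pos]
    nlinarith
  have hL := psi_lipschitzOn j hε hρ1 hρ0
  have himg := hL.hausdorffMeasure_image_le (Nat.cast_nonneg n : (0:ℝ) ≤ (n:ℝ))
  calc μH[(n:ℝ)] {u : E (n+1) | ‖u‖ = 1 ∧ m ≤ ε * u j}
      ≤ μH[(n:ℝ)] (ψ j ε '' closedBall (0 : E n) ρ) :=
        measure_mono (cover_subset j hε hm hm1)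
    _ ≤ _ * μH[(n:ℝ)] (closedBall (0 : E n) ρ) := himg
    _ < ∞ := by
        rw [closedBall_eq hρ0]
        apply ENNReal.mul_lt_top
        · exact ENNReal.rpow_lt_top_of_nonneg (Nat.cast_nonneg n) ENNReal.coe_ne_top
        · exact ENNReal.mul_lt_top ENNReal.ofReal_lt_top (cB_fin n)

lemma cap_lower (i : Fin (n+1)) {s : ℝ} (h0 : 0 ≤ s) (hs1 : s < 1) :
    ENNReal.ofReal ((Real.sqrt (1 - s) / 2) ^ n) * cB n ≤
      μH[(n:ℝ)] {u : E (n+1) | ‖u‖ = 1 ∧ s < u i} := by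
  set ρ := Real.sqrt (1 - s ^ 2) with hρ_def
  have hρ0 : 0 < ρ := Real.sqrt_pos.2 (by nlinarith)
  have hsub : Real.sqrt (1 - s) ≤ ρ := Real.sqrt_le_sqrt (by nlinarith)
  have h1 : ENNReal.ofReal ((Real.sqrt (1 - s) / 2) ^ n) * cB n ≤
      ENNReal.ofReal ((ρ / 2) ^ n) * cB n := by
    apply mul_le_mul_left
    apply ENNReal.ofReal_le_ofReal
    apply pow_le_pow_left₀ (by positivity)
    linarith
  refine h1.trans ?_
  rw [← closedBall_eq (by positivity)]
  calc μH[(n:ℝ)] (closedBall (0 : E n) (ρ / 2))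
      ≤ μH[(n:ℝ)] (ball (0 : E n) ρ) :=
        measure_mono (closedBall_subset_ball (by linarith))
    _ ≤ μH[(n:ℝ)] (rem i '' {u : E (n+1) | ‖u‖ = 1 ∧ s < u i}) :=
        measure_mono (proj_superset i h0 hs1)
    _ ≤ (1 : ℝ≥0∞) ^ (n:ℝ) * μH[(n:ℝ)] {u : E (n+1) | ‖u‖ = 1 ∧ s < u i} := by
        have := (rem_lipschitz i).hausdorffMeasure_image_le
          (Nat.cast_nonneg n : (0:ℝ) ≤ (n:ℝ)) {u : E (n+1) | ‖u‖ = 1 ∧ s < u i}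
        simpa using this
    _ = μH[(n:ℝ)] {u : E (n+1) | ‖u‖ = 1 ∧ s < u i} := by
        rw [ENNReal.one_rpow, one_mul]

lemma cap_upper (i : Fin (n+1)) {s : ℝ} (hs : 1/2 ≤ s) (hs1 : s < 1) :
    μH[(n:ℝ)] {u : E (n+1) | ‖u‖ = 1 ∧ s < u i} ≤
      ENNReal.ofReal ((2 * Real.sqrt 2 * Real.sqrt (1 - s)) ^ n) * cB n := by
  set ρ := Real.sqrt (1 - s ^ 2) with hρ_def
  have hs0 : (0:ℝ) < s := by linarith
  have hρ0 : 0 ≤ ρ := Real.sqrt_nonneg _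
  have hρ1 : ρ < 1 := by rw [hρ_def, Real.sqrt_lt' one_pos]; nlinarith
  have hρsq : ρ ^ 2 = 1 - s ^ 2 := Real.sq_sqrt (by nlinarith)
  have hden : Real.sqrt (1 - ρ ^ 2) = s := by
    rw [hρsq]
    simp only [sub_sub_cancel]
    exact Real.sqrt_sq hs0.le
  have hL := psi_lipschitzOn i (Or.inl rfl) hρ1 hρ0
  have hK2 : Real.toNNReal (Real.sqrt (1 + (ρ / Real.sqrt (1 - ρ ^ 2)) ^ 2)) ≤ (2 : ℝ≥0) := by
    have hc : (ρ / Real.sqrt (1 - ρ ^ 2)) ^ 2 ≤ 3 := by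
      rw [hden, div_pow, hρsq]
      rw [div_le_iff₀ (by positivity)]
      nlinarith
    have hle : Real.sqrt (1 + (ρ / Real.sqrt (1 - ρ ^ 2)) ^ 2) ≤ 2 := by
      have : (1:ℝ) + (ρ / Real.sqrt (1 - ρ ^ 2)) ^ 2 ≤ 4 := by linarith
      calc Real.sqrt (1 + (ρ / Real.sqrt (1 - ρ ^ 2)) ^ 2) ≤ Real.sqrt 4 :=
            Real.sqrt_le_sqrt this
        _ = 2 := by
            rw [show (4:ℝ) = 2 ^ 2 by norm_num, Real.sqrt_sq (by norm_num)]
    calc Real.toNNReal (Real.sqrt (1 + (ρ / Real.sqrt (1 - ρ ^ 2)) ^ 2)) ≤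
          Real.toNNReal 2 := Real.toNNReal_mono hle
      _ = 2 := by simp
  have hsubset : {u : E (n+1) | ‖u‖ = 1 ∧ s < u i} ⊆ ψ i 1 '' closedBall (0 : E n) ρ := by
    intro u hu
    apply cover_subset i (Or.inl rfl) hs0 hs1.le
    exact ⟨hu.1, by rw [one_mul]; exact hu.2.le⟩
  have himg' := hL.hausdorffMeasure_image_le (Nat.cast_nonneg n : (0:ℝ) ≤ (n:ℝ))
  have himg : μH[(n:ℝ)] (ψ i 1 '' closedBall (0 : E n) ρ) ≤
      ((2:ℝ≥0) : ℝ≥0∞) ^ (n:ℝ) * μH[(n:ℝ)] (closedBall (0 : E n) ρ) := by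
    refine himg'.trans (mul_le_mul_left ?_ _)
    exact ENNReal.rpow_le_rpow (ENNReal.coe_le_coe.2 hK2) (Nat.cast_nonneg n)
  have hρ_bound : ρ ^ n ≤ (Real.sqrt 2 * Real.sqrt (1 - s)) ^ n := by
    apply pow_le_pow_left₀ hρ0
    rw [← Real.sqrt_mul (by norm_num)]
    exact Real.sqrt_le_sqrt (by nlinarith)
  calc μH[(n:ℝ)] {u : E (n+1) | ‖u‖ = 1 ∧ s < u i}
      ≤ μH[(n:ℝ)] (ψ i 1 '' closedBall (0 : E n) ρ) := measure_mono hsubset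
    _ ≤ ((2:ℝ≥0) : ℝ≥0∞) ^ (n:ℝ) * μH[(n:ℝ)] (closedBall (0 : E n) ρ) := himg
    _ = ((2:ℝ≥0∞)) ^ (n:ℕ) * (ENNReal.ofReal (ρ ^ n) * cB n) := by
        rw [closedBall_eq hρ0, ← ENNReal.rpow_natCast (2:ℝ≥0∞) n]
        norm_num
    _ ≤ ((2:ℝ≥0∞)) ^ (n:ℕ) * (ENNReal.ofReal ((Real.sqrt 2 * Real.sqrt (1 - s)) ^ n) * cB n) := by
        apply mul_le_mul_right
        exact mul_le_mul_left (ENNReal.ofReal_le_ofReal hρ_bound) _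
    _ = ENNReal.ofReal ((2 * Real.sqrt 2 * Real.sqrt (1 - s)) ^ n) * cB n := by
        rw [show ((2:ℝ≥0∞)) ^ (n:ℕ) = ENNReal.ofReal ((2:ℝ) ^ n) by
          rw [ENNReal.ofReal_pow (by norm_num)]; norm_num]
        rw [← mul_assoc, ← ENNReal.ofReal_mul (by positivity)]
        congr 2
        rw [← mul_pow]
        congr 1
        ring

lemma sphere_fin (n : ℕ) : μH[(n:ℝ)] (sphere (0 : E (n+1)) 1) < ∞ := by
  set m := Real.sqrt (1 / (n + 1)) with hm_def
  have hm0 : 0 < m := Real.sqrt_pos.2 (by positivity)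
  have hm1 : m ≤ 1 := by
    rw [hm_def, show (1:ℝ) = Real.sqrt 1 by simp]
    apply Real.sqrt_le_sqrt
    rw [div_le_one (by positivity)]
    · norm_num
  have hcover : sphere (0 : E (n+1)) 1 ⊆
      ⋃ j : Fin (n+1), ({u : E (n+1) | ‖u‖ = 1 ∧ m ≤ 1 * u j} ∪
        {u : E (n+1) | ‖u‖ = 1 ∧ m ≤ (-1) * u j}) := by
    intro u hu
    have hnorm : ‖u‖ = 1 := by rwa [mem_sphere, dist_zero_right] at hu
    have hsum : ∑ j, (u j) ^ 2 = 1 := by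
      rw [← norm_sq_eq u, hnorm]; norm_num
    have hex : ∃ j, 1 / ((n:ℝ) + 1) ≤ (u j) ^ 2 := by
      by_contra hcon
      push_neg at hcon
      have := Finset.sum_lt_sum_of_nonempty (Finset.univ_nonempty (α := Fin (n+1)))
        (f := fun j => (u j) ^ 2) (g := fun _ => 1 / ((n:ℝ) + 1)) (fun j _ => hcon j)
      rw [hsum, Finset.sum_const, Finset.card_univ, Fintype.card_fin] at this
      rw [nsmul_eq_mul] at this
      have : (1:ℝ) < 1 := by
        calc (1:ℝ) < (n + 1 : ℕ) * (1 / ((n:ℝ) + 1)) := this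
          _ = 1 := by push_cast; field_simp
      exact lt_irrefl _ this
    obtain ⟨j, hj⟩ := hex
    have habs : m ≤ |u j| := by
      rw [hm_def, ← Real.sqrt_sq_eq_abs]
      exact Real.sqrt_le_sqrt (by push_cast at hj ⊢; linarith)
    rcases le_or_gt 0 (u j) with h | h
    · exact mem_iUnion.2 ⟨j, Or.inl ⟨hnorm, by rw [one_mul]; rwa [abs_of_nonneg h] at habs⟩⟩
    · exact mem_iUnion.2 ⟨j, Or.inr ⟨hnorm, by rw [neg_one_mul]; rwa [abs_of_neg h] at habs⟩⟩
  calc μH[(n:ℝ)] (sphere (0 : E (n+1)) 1) ≤ _ := measure_mono hcover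
    _ ≤ ∑' j : Fin (n+1), μH[(n:ℝ)] (({u : E (n+1) | ‖u‖ = 1 ∧ m ≤ 1 * u j} ∪
        {u : E (n+1) | ‖u‖ = 1 ∧ m ≤ (-1) * u j})) := measure_iUnion_le _
    _ < ∞ := by
        rw [tsum_fintype]
        apply ENNReal.sum_lt_top.2
        intro j _
        calc μH[(n:ℝ)] _ ≤ μH[(n:ℝ)] {u : E (n+1) | ‖u‖ = 1 ∧ m ≤ 1 * u j} +
              μH[(n:ℝ)] {u : E (n+1) | ‖u‖ = 1 ∧ m ≤ (-1) * u j} := measure_union_le _ _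
          _ < ∞ := ENNReal.add_lt_top.2
              ⟨graph_bound j (Or.inl rfl) hm0 hm1, graph_bound j (Or.inr rfl) hm0 hm1⟩

lemma sphere_pos (n : ℕ) : 0 < μH[(n:ℝ)] (sphere (0 : E (n+1)) 1) := by
  have h := cap_lower (n := n) 0 (le_refl (0:ℝ)) one_pos
  have hsub : {u : E (n+1) | ‖u‖ = 1 ∧ (0:ℝ) < u 0} ⊆ sphere (0 : E (n+1)) 1 := by
    intro u hu
    rw [mem_sphere, dist_zero_right]
    exact hu.1
  have hpos : 0 < ENNReal.ofReal ((Real.sqrt (1 - 0) / 2) ^ n) * cB n := by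
    apply ENNReal.mul_pos
    · simp only [ne_eq, ENNReal.ofReal_eq_zero, not_le]
      positivity
    · exact (cB_pos n).ne'
  exact hpos.trans_le (h.trans (measure_mono hsub))

end S12d


namespace S12e
open S12 S12b S12c S12d

variable {n : ℕ} {α : ℝ} {i : Fin (n+1)} {t : ℝ}

lemma cast_rw : ((n+1:ℕ):ℝ) - 1 = (n:ℝ) := by push_cast; ring

lemma sphereUnif_eq :
    sphereUnif (n+1) = (μH[(n:ℝ)] (sphere (0 : Vec (n+1)) 1))⁻¹ •
      (μH[(n:ℝ)]).restrict (sphere (0 : Vec (n+1)) 1) := by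
  unfold sphereUnif
  rw [cast_rw]

lemma sigma_apply (A : Set (Vec (n+1))) :
    sphereUnif (n+1) A =
      (μH[(n:ℝ)] (sphere (0 : Vec (n+1)) 1))⁻¹ * μH[(n:ℝ)] (A ∩ sphere (0 : Vec (n+1)) 1) := by
  rw [sphereUnif_eq, Measure.smul_apply, Measure.restrict_apply' (isClosed_sphere.measurableSet),
    smul_eq_mul]

lemma sigma_univ : sphereUnif (n+1) Set.univ = 1 := by
  rw [sigma_apply, Set.univ_inter]
  exact ENNReal.inv_mul_cancel (sphere_pos n).ne' (sphere_fin n).ne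

instance : IsProbabilityMeasure (sphereUnif (n+1)) := ⟨sigma_univ⟩

lemma ae_norm_one : ∀ᵐ u ∂(sphereUnif (n+1)), ‖u‖ = 1 := by
  rw [ae_iff]
  rw [sigma_apply]
  have : {u : Vec (n+1) | ¬ ‖u‖ = 1} ∩ sphere (0 : Vec (n+1)) 1 = ∅ := by
    ext u
    simp only [Set.mem_inter_iff, Set.mem_setOf_eq, mem_sphere_iff_norm, sub_zero,
      Set.mem_empty_iff_false, iff_false, not_and]
    exact fun h h2 => h h2
  rw [this, measure_empty, mul_zero]

lemma meas_coord : Measurable (fun x : Vec (n+1) => x i) := by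
  exact (EuclideanSpace.proj i : Vec (n+1) →L[ℝ] ℝ).continuous.measurable

lemma measurableSet_T : MeasurableSet {x : Vec (n+1) | t < x i} :=
  measurableSet_lt measurable_const meas_coord

lemma meas_hfun (hα : 0 < α) : Measurable (fun r : ℝ => 1 - (1 - r) ^ (1/α)) := by
  have h1 : Continuous fun r : ℝ => (1 - r) ^ (1/α) :=
    (Real.continuous_rpow_const (by positivity)).comp (continuous_const.sub continuous_id)
  exact (continuous_const.sub h1).measurable

lemma meas_fmap (hα : 0 < α) :
    Measurable (fun p : ℝ × Vec (n+1) => (1 - (1 - p.1) ^ (1/α)) • p.2) :=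
  ((meas_hfun hα).comp measurable_fst).smul measurable_snd

instance : IsProbabilityMeasure (volume.restrict (Icc (0:ℝ) 1)) :=
  ⟨by rw [Measure.restrict_apply_univ, Real.volume_Icc]; norm_num⟩

lemma muA_apply (hα : 0 < α) {s : Set (Vec (n+1))} (hs : MeasurableSet s) :
    alphaRadial (n+1) α s =
      ((volume.restrict (Icc (0:ℝ) 1)).prod (sphereUnif (n+1)))
        ((fun p : ℝ × Vec (n+1) => (1 - (1 - p.1) ^ (1/α)) • p.2) ⁻¹' s) :=
  Measure.map_apply (meas_fmap hα) hs

lemma prob_muA (hα : 0 < α) : IsProbabilityMeasure (alphaRadial (n+1) α) :=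
  Measure.isProbabilityMeasure_map (meas_fmap hα).aemeasurable

lemma preimage_T : ((fun p : ℝ × Vec (n+1) => (1 - (1 - p.1) ^ (1/α)) • p.2) ⁻¹'
      {x : Vec (n+1) | t < x i}) = {p : ℝ × Vec (n+1) | t < (1 - (1 - p.1) ^ (1/α)) * p.2 i} := by
  ext p
  simp only [Set.mem_preimage, Set.mem_setOf_eq]
  rfl

lemma hfun_mem (hα : 0 < α) {r : ℝ} (hr : r ∈ Icc (0:ℝ) 1) :
    0 ≤ 1 - (1 - r) ^ (1/α) ∧ 1 - (1 - r) ^ (1/α) ≤ 1 := by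
  obtain ⟨hr0, hr1⟩ := hr
  have h0 : (0:ℝ) ≤ 1 - r := by linarith
  have h1 : (0:ℝ) ≤ (1 - r) ^ (1/α) := Real.rpow_nonneg h0 _
  have h2 : (1 - r) ^ (1/α) ≤ 1 := Real.rpow_le_one h0 (by linarith) (by positivity)
  constructor <;> linarith

lemma slice_empty (hα : 0 < α) {a : ℝ} (ht : 1/2 ≤ t) (hat : a ≤ t) :
    {r : ℝ | t < (1 - (1 - r) ^ (1/α)) * a} ∩ Icc (0:ℝ) 1 = ∅ := by
  ext r
  simp only [Set.mem_inter_iff, Set.mem_setOf_eq, Set.mem_empty_iff_false, iff_false, not_and]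
  intro hlt hr
  obtain ⟨hh0, hh1⟩ := hfun_mem hα hr
  rcases le_or_gt a 0 with ha | ha
  · nlinarith
  · nlinarith

lemma slice_eq (hα : 0 < α) {a : ℝ} (ht : 0 < t) (hta : t < a) (ha1 : a ≤ 1) :
    {r : ℝ | t < (1 - (1 - r) ^ (1/α)) * a} ∩ Icc (0:ℝ) 1 =
      Ioc (1 - ((a - t)/a) ^ α) 1 := by
  have ha : 0 < a := ht.trans hta
  have hq0 : 0 < (a - t)/a := div_pos (by linarith) ha
  have hq1 : (a - t)/a ≤ 1 := (div_le_one ha).2 (by linarith)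
  have hqpos : 0 < ((a - t)/a) ^ α := Real.rpow_pos_of_pos hq0 α
  have hqle1 : ((a - t)/a) ^ α ≤ 1 := Real.rpow_le_one hq0.le hq1 (le_of_lt hα)
  have hfrac : 1 - t/a = (a - t)/a := by field_simp
  ext r
  simp only [Set.mem_inter_iff, Set.mem_setOf_eq, Set.mem_Ioc, Set.mem_Icc]
  constructor
  · rintro ⟨hlt, hr0, hr1⟩
    refine ⟨?_, hr1⟩
    have h1 : t/a < 1 - (1 - r) ^ (1/α) := (div_lt_iff₀ ha).2 (by linarith [hlt])
    have h2 : (1 - r) ^ (1/α) < (a - t)/a := by linarith [hfrac]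
    have h3 : ((1 - r) ^ (1/α)) ^ α < ((a - t)/a) ^ α :=
      Real.rpow_lt_rpow (Real.rpow_nonneg (by linarith) _) h2 hα
    rw [one_div, Real.rpow_inv_rpow (by linarith : (0:ℝ) ≤ 1 - r) hα.ne'] at h3
    linarith
  · rintro ⟨hr1q, hr1⟩
    have hr0 : 0 ≤ r := by linarith
    refine ⟨?_, hr0, hr1⟩
    have h1 : 1 - r < ((a - t)/a) ^ α := by linarith
    have h2 : (1 - r) ^ (1/α) < (((a - t)/a) ^ α) ^ (1/α) :=
      Real.rpow_lt_rpow (by linarith) h1 (by positivity)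
    rw [one_div, Real.rpow_rpow_inv hq0.le hα.ne'] at h2
    have h3 : t/a < 1 - (1 - r) ^ (1/α) := by rw [one_div]; linarith [hfrac]
    have := (div_lt_iff₀ ha).1 h3
    linarith

lemma slice_measure_empty (hα : 0 < α) {a : ℝ} (ht : 1/2 ≤ t) (hat : a ≤ t) :
    (volume.restrict (Icc (0:ℝ) 1)) {r : ℝ | t < (1 - (1 - r) ^ (1/α)) * a} = 0 := by
  rw [Measure.restrict_apply' measurableSet_Icc, slice_empty hα ht hat, measure_empty]

lemma slice_measure_eq (hα : 0 < α) {a : ℝ} (ht : 0 < t) (hta : t < a) (ha1 : a ≤ 1) :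
    (volume.restrict (Icc (0:ℝ) 1)) {r : ℝ | t < (1 - (1 - r) ^ (1/α)) * a} =
      ENNReal.ofReal (((a - t)/a) ^ α) := by
  rw [Measure.restrict_apply' measurableSet_Icc, slice_eq hα ht hta ha1, Real.volume_Ioc]
  congr 1
  ring

lemma coord_sq_le (x : Vec (n+1)) (j : Fin (n+1)) : (x j) ^ 2 ≤ ‖x‖ ^ 2 := by
  rw [S12.norm_sq_eq (n := n+1) x]
  exact Finset.single_le_sum (f := fun k => (x k) ^ 2) (fun k _ => sq_nonneg _)
    (Finset.mem_univ j)

lemma abs_coord_le (x : Vec (n+1)) (j : Fin (n+1)) (h : ‖x‖ ≤ 1) : |x j| ≤ 1 := by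
  have h1 := coord_sq_le x j
  have h2 := norm_nonneg x
  nlinarith [sq_abs (x j), abs_nonneg (x j)]

lemma qU (hα : 0 < α) (ht : 1/2 ≤ t) :
    alphaRadial (n+1) α {x : Vec (n+1) | t < x i} ≤
      ENNReal.ofReal ((2*(1-t))^α) * sphereUnif (n+1) {x : Vec (n+1) | t < x i} := by
  rw [muA_apply hα measurableSet_T, preimage_T]
  have hmeas : MeasurableSet {p : ℝ × Vec (n+1) | t < (1 - (1 - p.1) ^ (1/α)) * p.2 i} :=
    measurableSet_lt measurable_const
      (((meas_hfun hα).comp measurable_fst).mul (meas_coord.comp measurable_snd))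
  rw [Measure.prod_apply_symm hmeas]
  have hbound : ∀ᵐ u ∂(sphereUnif (n+1)),
      (volume.restrict (Icc (0:ℝ) 1)) ((fun r => (r, u)) ⁻¹'
          {p : ℝ × Vec (n+1) | t < (1 - (1 - p.1) ^ (1/α)) * p.2 i}) ≤
        {x : Vec (n+1) | t < x i}.indicator
          (fun _ => ENNReal.ofReal ((2*(1-t))^α)) u := by
    filter_upwards [ae_norm_one] with u hu
    have hpre : ((fun r => (r, u)) ⁻¹'
        {p : ℝ × Vec (n+1) | t < (1 - (1 - p.1) ^ (1/α)) * p.2 i}) =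
        {r : ℝ | t < (1 - (1 - r) ^ (1/α)) * u i} := rfl
    rw [hpre]
    rcases le_or_gt (u i) t with hle | hgt
    · rw [slice_measure_empty hα ht hle]
      exact zero_le
    · have ht0 : (0:ℝ) < t := by linarith
      have hui1 : u i ≤ 1 := by
        have := abs_coord_le u i (le_of_eq hu)
        exact (le_abs_self _).trans this
      rw [slice_measure_eq hα ht0 hgt hui1,
        Set.indicator_of_mem (show u ∈ {x : Vec (n+1) | t < x i} from hgt)]
      apply ENNReal.ofReal_le_ofReal
      apply Real.rpow_le_rpow (div_nonneg (by linarith) (by linarith)) ?_ hα.le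
      have h1 : (u i - t)/(u i) ≤ 2*(u i - t) := by
        rw [div_le_iff₀ (by linarith)]
        nlinarith
      linarith
  calc ∫⁻ u, (volume.restrict (Icc (0:ℝ) 1)) ((fun r => (r, u)) ⁻¹'
          {p : ℝ × Vec (n+1) | t < (1 - (1 - p.1) ^ (1/α)) * p.2 i}) ∂(sphereUnif (n+1))
      ≤ ∫⁻ u, {x : Vec (n+1) | t < x i}.indicator
          (fun _ => ENNReal.ofReal ((2*(1-t))^α)) u ∂(sphereUnif (n+1)) :=
        lintegral_mono_ae hbound
    _ = ENNReal.ofReal ((2*(1-t))^α) * sphereUnif (n+1) {x : Vec (n+1) | t < x i} := by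
        rw [lintegral_indicator_const measurableSet_T]

lemma qL (hα : 0 < α) (ht : 1/2 ≤ t) (ht1 : t < 1) :
    ENNReal.ofReal (((1-t)/2)^α) * sphereUnif (n+1) {x : Vec (n+1) | (1+t)/2 < x i} ≤
      alphaRadial (n+1) α {x : Vec (n+1) | t < x i} := by
  rw [muA_apply hα measurableSet_T, preimage_T]
  have hmeas : MeasurableSet {p : ℝ × Vec (n+1) | t < (1 - (1 - p.1) ^ (1/α)) * p.2 i} :=
    measurableSet_lt measurable_const
      (((meas_hfun hα).comp measurable_fst).mul (meas_coord.comp measurable_snd))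
  rw [Measure.prod_apply_symm hmeas]
  have hbound : ∀ᵐ u ∂(sphereUnif (n+1)),
      {x : Vec (n+1) | (1+t)/2 < x i}.indicator
          (fun _ => ENNReal.ofReal (((1-t)/2)^α)) u ≤
        (volume.restrict (Icc (0:ℝ) 1)) ((fun r => (r, u)) ⁻¹'
          {p : ℝ × Vec (n+1) | t < (1 - (1 - p.1) ^ (1/α)) * p.2 i}) := by
    filter_upwards [ae_norm_one] with u hu
    have hpre : ((fun r => (r, u)) ⁻¹'
        {p : ℝ × Vec (n+1) | t < (1 - (1 - p.1) ^ (1/α)) * p.2 i}) =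
        {r : ℝ | t < (1 - (1 - r) ^ (1/α)) * u i} := rfl
    rw [hpre]
    rcases Classical.em (u ∈ {x : Vec (n+1) | (1+t)/2 < x i}) with hmem | hmem
    · have hgt : (1+t)/2 < u i := hmem
      have ht0 : (0:ℝ) < t := by linarith
      have hta : t < u i := by linarith
      have hui1 : u i ≤ 1 := by
        have := abs_coord_le u i (le_of_eq hu)
        exact (le_abs_self _).trans this
      rw [slice_measure_eq hα ht0 hta hui1, Set.indicator_of_mem hmem]
      apply ENNReal.ofReal_le_ofReal
      apply Real.rpow_le_rpow (by linarith) ?_ hα.le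
      rw [div_le_div_iff₀ (by norm_num) (by linarith)]
      nlinarith
    · rw [Set.indicator_of_notMem hmem]
      exact zero_le
  calc ENNReal.ofReal (((1-t)/2)^α) * sphereUnif (n+1) {x : Vec (n+1) | (1+t)/2 < x i}
      = ∫⁻ u, {x : Vec (n+1) | (1+t)/2 < x i}.indicator
          (fun _ => ENNReal.ofReal (((1-t)/2)^α)) u ∂(sphereUnif (n+1)) := by
        rw [lintegral_indicator_const measurableSet_T]
    _ ≤ _ := lintegral_mono_ae hbound

lemma ae_norm_le (hα : 0 < α) : ∀ᵐ x ∂(alphaRadial (n+1) α), ‖x‖ ≤ 1 := by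
  rw [ae_iff]
  have hmeas : MeasurableSet {x : Vec (n+1) | ¬ ‖x‖ ≤ 1} := by
    simp only [not_le]
    exact measurableSet_lt measurable_const measurable_norm
  rw [muA_apply hα hmeas]
  have hmeas2 : MeasurableSet ((fun p : ℝ × Vec (n+1) => (1 - (1 - p.1) ^ (1/α)) • p.2) ⁻¹'
      {x : Vec (n+1) | ¬ ‖x‖ ≤ 1}) := (meas_fmap hα) hmeas
  rw [Measure.prod_apply_symm hmeas2]
  have hzero : ∀ᵐ u ∂(sphereUnif (n+1)),
      (volume.restrict (Icc (0:ℝ) 1)) ((fun r => (r, u)) ⁻¹'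
        ((fun p : ℝ × Vec (n+1) => (1 - (1 - p.1) ^ (1/α)) • p.2) ⁻¹'
          {x : Vec (n+1) | ¬ ‖x‖ ≤ 1})) = 0 := by
    filter_upwards [ae_norm_one] with u hu
    rw [Measure.restrict_apply' measurableSet_Icc]
    have : ((fun r => (r, u)) ⁻¹'
        ((fun p : ℝ × Vec (n+1) => (1 - (1 - p.1) ^ (1/α)) • p.2) ⁻¹'
          {x : Vec (n+1) | ¬ ‖x‖ ≤ 1})) ∩ Icc (0:ℝ) 1 = ∅ := by
      ext r
      simp only [Set.mem_inter_iff, Set.mem_preimage, Set.mem_setOf_eq,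
        Set.mem_empty_iff_false, iff_false, not_and]
      intro hcon hr
      apply hcon
      obtain ⟨hh0, hh1⟩ := hfun_mem hα hr
      rw [norm_smul, hu, mul_one, Real.norm_eq_abs, abs_of_nonneg hh0]
      exact hh1
    rw [this, measure_empty]
  calc ∫⁻ u, (volume.restrict (Icc (0:ℝ) 1)) ((fun r => (r, u)) ⁻¹'
        ((fun p : ℝ × Vec (n+1) => (1 - (1 - p.1) ^ (1/α)) • p.2) ⁻¹'
          {x : Vec (n+1) | ¬ ‖x‖ ≤ 1})) ∂(sphereUnif (n+1))
      = ∫⁻ _, 0 ∂(sphereUnif (n+1)) := lintegral_congr_ae hzero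
    _ = 0 := lintegral_zero

lemma ae_coord_le (hα : 0 < α) : ∀ᵐ x ∂(alphaRadial (n+1) α), |x i| ≤ 1 := by
  filter_upwards [ae_norm_le hα] with x hx
  exact abs_coord_le x i hx

/-- the numerator integral -/
def Nt (n : ℕ) (α : ℝ) (i : Fin (n+1)) (t : ℝ) : ℝ≥0∞ :=
  ∫⁻ x in {x : Vec (n+1) | t < x i}, ENNReal.ofReal (x i - t) ∂(alphaRadial (n+1) α)

lemma nU (hα : 0 < α) (ht0 : t ≤ 1) :
    Nt n α i t ≤ ENNReal.ofReal (1-t) * alphaRadial (n+1) α {x : Vec (n+1) | t < x i} := by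
  have hb : ∀ᵐ x ∂((alphaRadial (n+1) α).restrict {x : Vec (n+1) | t < x i}),
      ENNReal.ofReal (x i - t) ≤ ENNReal.ofReal (1-t) := by
    filter_upwards [ae_restrict_of_ae (ae_coord_le hα)] with x hx
    exact ENNReal.ofReal_le_ofReal (by
      have := le_abs_self (x i)
      linarith)
  calc Nt n α i t ≤ ∫⁻ _ in {x : Vec (n+1) | t < x i}, ENNReal.ofReal (1-t)
        ∂(alphaRadial (n+1) α) := lintegral_mono_ae hb
    _ = ENNReal.ofReal (1-t) * alphaRadial (n+1) α {x : Vec (n+1) | t < x i} :=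
        setLIntegral_const _ _

lemma nL (hα : 0 < α) (ht1 : t < 1) :
    ENNReal.ofReal ((1-t)/2) * alphaRadial (n+1) α {x : Vec (n+1) | (1+t)/2 < x i} ≤
      Nt n α i t := by
  have hsub : {x : Vec (n+1) | (1+t)/2 < x i} ⊆ {x : Vec (n+1) | t < x i} := by
    intro x hx
    have : (1+t)/2 < x i := hx
    show t < x i
    linarith
  have step1 : ENNReal.ofReal ((1-t)/2) * alphaRadial (n+1) α {x : Vec (n+1) | (1+t)/2 < x i} ≤
      ∫⁻ x in {x : Vec (n+1) | (1+t)/2 < x i}, ENNReal.ofReal (x i - t)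
        ∂(alphaRadial (n+1) α) := by
    rw [← setLIntegral_const]
    apply lintegral_mono_ae
    filter_upwards [ae_restrict_mem (measurableSet_T (n := n) (i := i) (t := (1+t)/2))] with x hx
    apply ENNReal.ofReal_le_ofReal
    have : (1+t)/2 < x i := hx
    linarith
  refine step1.trans ?_
  exact lintegral_mono' (Measure.restrict_mono hsub le_rfl) le_rfl

lemma integrable_coord (hα : 0 < α) :
    Integrable (fun x : Vec (n+1) => x i)
      ((alphaRadial (n+1) α).restrict {x : Vec (n+1) | t < x i}) := by
  haveI := prob_muA (n := n) (α := α) hα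
  apply Integrable.mono' (integrable_const (1:ℝ)) meas_coord.aestronglyMeasurable
  filter_upwards [ae_restrict_of_ae (ae_coord_le hα)] with x hx
  exact hx

lemma D_eq (hα : 0 < α) :
    ∫ x in {x : Vec (n+1) | t < x i}, (x i - t) ∂(alphaRadial (n+1) α) =
      (Nt n α i t).toReal := by
  rw [integral_eq_lintegral_of_nonneg_ae]
  · rfl
  · filter_upwards [ae_restrict_mem (measurableSet_T (n := n) (i := i) (t := t))] with x hx
    have : t < x i := hx
    simp only [Pi.zero_apply]
    linarith
  · exact ((meas_coord (n := n) (i := i)).sub measurable_const).aestronglyMeasurable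

lemma M_split (hα : 0 < α) :
    ∫ x in {x : Vec (n+1) | t < x i}, x i ∂(alphaRadial (n+1) α) =
      (∫ x in {x : Vec (n+1) | t < x i}, (x i - t) ∂(alphaRadial (n+1) α)) +
        t * (alphaRadial (n+1) α {x : Vec (n+1) | t < x i}).toReal := by
  haveI := prob_muA (n := n) (α := α) hα
  have h1 : ∫ x in {x : Vec (n+1) | t < x i}, (x i - t) ∂(alphaRadial (n+1) α) =
      (∫ x in {x : Vec (n+1) | t < x i}, x i ∂(alphaRadial (n+1) α)) -
        (∫ _ in {x : Vec (n+1) | t < x i}, t ∂(alphaRadial (n+1) α)) :=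
    integral_sub (integrable_coord hα) (integrable_const t)
  rw [h1, setIntegral_const, smul_eq_mul, measureReal_def]
  ring

lemma sqrt_pow_eq {x : ℝ} (hx : 0 ≤ x) (m : ℕ) :
    (Real.sqrt x) ^ m = x ^ ((m:ℝ)/2) := by
  rw [Real.sqrt_eq_rpow, ← Real.rpow_natCast (x ^ ((1:ℝ)/2)) m, ← Real.rpow_mul hx]
  congr 1
  ring

lemma sigma_inter (s : ℝ) :
    {x : Vec (n+1) | s < x i} ∩ sphere (0 : Vec (n+1)) 1 =
      {u : E (n+1) | ‖u‖ = 1 ∧ s < u i} := by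
  ext u
  simp only [Set.mem_inter_iff, Set.mem_setOf_eq, mem_sphere_iff_norm, sub_zero]
  exact and_comm

lemma sigma_cap_upper {s : ℝ} (hs : 1/2 ≤ s) (hs1 : s < 1) :
    sphereUnif (n+1) {x : Vec (n+1) | s < x i} ≤
      (μH[(n:ℝ)] (sphere (0 : Vec (n+1)) 1))⁻¹ *
        (ENNReal.ofReal ((2 * Real.sqrt 2 * Real.sqrt (1 - s)) ^ n) * cB n) := by
  rw [sigma_apply, sigma_inter]
  exact mul_le_mul_right (cap_upper i hs hs1) _

lemma sigma_cap_lower {s : ℝ} (hs : 0 ≤ s) (hs1 : s < 1) :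
    (μH[(n:ℝ)] (sphere (0 : Vec (n+1)) 1))⁻¹ *
        (ENNReal.ofReal ((Real.sqrt (1 - s) / 2) ^ n) * cB n) ≤
      sphereUnif (n+1) {x : Vec (n+1) | s < x i} := by
  rw [sigma_apply, sigma_inter]
  exact mul_le_mul_right (cap_lower i hs hs1) _

set_option maxHeartbeats 2000000 in
lemma main (n : ℕ) (α : ℝ) (hα : 0 < α) (i : Fin (n+1)) :
    ∃ cL : ℝ, 0 < cL ∧ ∃ cU : ℝ, 0 < cU ∧ ∀ t ∈ Set.Ico (1/2 : ℝ) 1,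
      cL * (1 - t) ^ (2*α + ((n+1:ℕ):ℝ)) ≤ gAlphaPlus (n+1) α i t ∧
        gAlphaPlus (n+1) α i t ≤ cU * (1 - t) ^ (2*α + ((n+1:ℕ):ℝ)) := by
  haveI := prob_muA (n := n) (α := α) hα
  set mSr : ℝ := (μH[(n:ℝ)] (sphere (0 : Vec (n+1)) 1)).toReal with hmSr_def
  have hmSr : 0 < mSr := ENNReal.toReal_pos (sphere_pos n).ne' (sphere_fin n).ne
  have hmS_inv : (μH[(n:ℝ)] (sphere (0 : Vec (n+1)) 1))⁻¹ = ENNReal.ofReal mSr⁻¹ := by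
    rw [ENNReal.ofReal_inv_of_pos hmSr, ENNReal.ofReal_toReal (sphere_fin n).ne]
  set cb : ℝ := (cB n).toReal with hcb_def
  have hcb : 0 < cb := ENNReal.toReal_pos (cB_pos n).ne' (cB_fin n).ne
  have hcB : cB n = ENNReal.ofReal cb := (ENNReal.ofReal_toReal (cB_fin n).ne).symm
  -- real constants
  set q2 : ℝ := 2^α * (mSr⁻¹ * ((2*Real.sqrt 2)^n * cb)) with hq2_def
  have hq2 : 0 < q2 := by
    apply mul_pos (Real.rpow_pos_of_pos (by norm_num) α)
    apply mul_pos (inv_pos.2 hmSr)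
    apply mul_pos (pow_pos (by positivity) n) hcb
  set c1 : ℝ := mSr⁻¹ * ((1/2:ℝ)^n * cb) with hc1_def
  have hc1 : 0 < c1 := by
    apply mul_pos (inv_pos.2 hmSr)
    exact mul_pos (pow_pos (by norm_num) n) hcb
  -- upper bound on Q
  have hQu : ∀ t : ℝ, 1/2 ≤ t → t < 1 →
      (alphaRadial (n+1) α {x : Vec (n+1) | t < x i}).toReal ≤
        q2 * ((1-t)^α * (1-t)^((n:ℝ)/2)) := by
    intro t ht ht1
    have h1t : (0:ℝ) < 1 - t := by linarith
    apply ENNReal.toReal_le_of_le_ofReal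
    · have := Real.rpow_pos_of_pos h1t α
      have := Real.rpow_pos_of_pos h1t ((n:ℝ)/2)
      positivity
    calc alphaRadial (n+1) α {x : Vec (n+1) | t < x i}
        ≤ ENNReal.ofReal ((2*(1-t))^α) * sphereUnif (n+1) {x : Vec (n+1) | t < x i} :=
          qU hα ht
      _ ≤ ENNReal.ofReal ((2*(1-t))^α) * ((μH[(n:ℝ)] (sphere (0 : Vec (n+1)) 1))⁻¹ *
            (ENNReal.ofReal ((2 * Real.sqrt 2 * Real.sqrt (1 - t)) ^ n) * cB n)) :=
          mul_le_mul_right (sigma_cap_upper ht ht1) _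
      _ = ENNReal.ofReal ((2*(1-t))^α * (mSr⁻¹ *
            ((2 * Real.sqrt 2 * Real.sqrt (1 - t)) ^ n * cb))) := by
          rw [hmS_inv, hcB, ← ENNReal.ofReal_mul (by positivity),
            ← ENNReal.ofReal_mul (inv_nonneg.2 hmSr.le),
            ← ENNReal.ofReal_mul (by positivity)]
      _ ≤ ENNReal.ofReal (q2 * ((1-t)^α * (1-t)^((n:ℝ)/2))) := by
          apply ENNReal.ofReal_le_ofReal
          apply le_of_eq
          rw [Real.mul_rpow (by norm_num) h1t.le]
          rw [mul_pow, mul_pow, sqrt_pow_eq h1t.le n]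
          rw [hq2_def]
          ring
  -- lower bound on Q
  have hQl : ∀ t : ℝ, 1/2 ≤ t → t < 1 →
      c1 * (((1-t)/2)^α * ((1-t)/2)^((n:ℝ)/2)) ≤
        (alphaRadial (n+1) α {x : Vec (n+1) | t < x i}).toReal := by
    intro t ht ht1
    have h1t : (0:ℝ) < 1 - t := by linarith
    have hhalf : (0:ℝ) < (1-t)/2 := by linarith
    rw [← ENNReal.ofReal_le_iff_le_toReal (measure_ne_top _ _)]
    have hs' : (1:ℝ)/2 ≤ (1+t)/2 := by linarith
    have hs'1 : (1+t)/2 < 1 := by linarith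
    have h1s' : 1 - (1+t)/2 = (1-t)/2 := by ring
    calc ENNReal.ofReal (c1 * (((1-t)/2)^α * ((1-t)/2)^((n:ℝ)/2)))
        = ENNReal.ofReal (((1-t)/2)^α) * (ENNReal.ofReal mSr⁻¹ *
            (ENNReal.ofReal ((Real.sqrt ((1-t)/2) / 2) ^ n) * ENNReal.ofReal cb)) := by
          rw [← ENNReal.ofReal_mul (by positivity), ← ENNReal.ofReal_mul (by positivity),
            ← ENNReal.ofReal_mul (Real.rpow_nonneg hhalf.le α)]
          congr 1
          rw [div_pow, sqrt_pow_eq hhalf.le n, hc1_def]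
          simp only [one_div, inv_pow]; ring
      _ = ENNReal.ofReal (((1-t)/2)^α) * ((μH[(n:ℝ)] (sphere (0 : Vec (n+1)) 1))⁻¹ *
            (ENNReal.ofReal ((Real.sqrt (1 - (1+t)/2) / 2) ^ n) * cB n)) := by
          rw [hmS_inv, hcB, h1s']
      _ ≤ ENNReal.ofReal (((1-t)/2)^α) * sphereUnif (n+1) {x : Vec (n+1) | (1+t)/2 < x i} :=
          mul_le_mul_right (sigma_cap_lower (by linarith) hs'1) _
      _ ≤ alphaRadial (n+1) α {x : Vec (n+1) | t < x i} := qL hα ht ht1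
  refine ⟨(c1 * (1/2:ℝ)^α * (1/2:ℝ)^((n:ℝ)/2)) *
      (c1 * (1/2) * (1/4:ℝ)^α * (1/4:ℝ)^((n:ℝ)/2)), ?_, q2 * q2 * Real.sqrt 2, ?_, ?_⟩
  · have h1 : (0:ℝ) < (1/2:ℝ)^α := Real.rpow_pos_of_pos (by norm_num) α
    have h2 : (0:ℝ) < (1/2:ℝ)^((n:ℝ)/2) := Real.rpow_pos_of_pos (by norm_num) _
    have h3 : (0:ℝ) < (1/4:ℝ)^α := Real.rpow_pos_of_pos (by norm_num) α
    have h4 : (0:ℝ) < (1/4:ℝ)^((n:ℝ)/2) := Real.rpow_pos_of_pos (by norm_num) _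
    positivity
  · positivity
  intro t ⟨ht, ht1⟩
  have h1t : (0:ℝ) < 1 - t := by linarith
  set X : ℝ := (1-t)^α with hX_def
  set Y : ℝ := (1-t)^((n:ℝ)/2) with hY_def
  have hX : 0 < X := Real.rpow_pos_of_pos h1t α
  have hY : 0 < Y := Real.rpow_pos_of_pos h1t _
  -- rewrite halves and quarters
  have hhalfα : ((1-t)/2)^α = X * (1/2:ℝ)^α := by
    rw [show (1-t)/2 = (1-t) * (1/2) by ring, Real.mul_rpow h1t.le (by norm_num)]
  have hhalfβ : ((1-t)/2)^((n:ℝ)/2) = Y * (1/2:ℝ)^((n:ℝ)/2) := by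
    rw [show (1-t)/2 = (1-t) * (1/2) by ring, Real.mul_rpow h1t.le (by norm_num)]
  have hquartα : ((1-t)/4)^α = X * (1/4:ℝ)^α := by
    rw [show (1-t)/4 = (1-t) * (1/4) by ring, Real.mul_rpow h1t.le (by norm_num)]
  have hquartβ : ((1-t)/4)^((n:ℝ)/2) = Y * (1/4:ℝ)^((n:ℝ)/2) := by
    rw [show (1-t)/4 = (1-t) * (1/4) by ring, Real.mul_rpow h1t.le (by norm_num)]
  set Q : ℝ := (alphaRadial (n+1) α {x : Vec (n+1) | t < x i}).toReal with hQ_def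
  set D : ℝ := (Nt n α i t).toReal with hD_def
  set q1 : ℝ := c1 * (1/2:ℝ)^α * (1/2:ℝ)^((n:ℝ)/2) with hq1_def
  set d1 : ℝ := c1 * (1/2) * (1/4:ℝ)^α * (1/4:ℝ)^((n:ℝ)/2) with hd1_def
  have hq1pos : 0 < q1 := by
    have h1 : (0:ℝ) < (1/2:ℝ)^α := Real.rpow_pos_of_pos (by norm_num) α
    have h2 : (0:ℝ) < (1/2:ℝ)^((n:ℝ)/2) := Real.rpow_pos_of_pos (by norm_num) _
    positivity
  have hd1pos : 0 < d1 := by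
    have h3 : (0:ℝ) < (1/4:ℝ)^α := Real.rpow_pos_of_pos (by norm_num) α
    have h4 : (0:ℝ) < (1/4:ℝ)^((n:ℝ)/2) := Real.rpow_pos_of_pos (by norm_num) _
    positivity
  have hQlow : q1 * (X * Y) ≤ Q := by
    have := hQl t ht ht1
    rw [hhalfα, hhalfβ] at this
    calc q1 * (X * Y) = c1 * ((X * (1/2:ℝ)^α) * (Y * (1/2:ℝ)^((n:ℝ)/2))) := by
          rw [hq1_def]; ring
      _ ≤ Q := this
  have hQup : Q ≤ q2 * (X * Y) := hQu t ht ht1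
  have hQpos : 0 < Q := lt_of_lt_of_le (by positivity) hQlow
  have hNtop : Nt n α i t ≠ ∞ := by
    apply ne_top_of_le_ne_top ?_ (nU (n := n) (i := i) hα (by linarith))
    exact ENNReal.mul_ne_top ENNReal.ofReal_ne_top (measure_ne_top _ _)
  have hDup : D ≤ (1-t) * Q := by
    have h := nU (n := n) (i := i) hα (le_of_lt ht1)
    have h2 := ENNReal.toReal_mono
      (ENNReal.mul_ne_top ENNReal.ofReal_ne_top (measure_ne_top _ _)) h
    rwa [ENNReal.toReal_mul, ENNReal.toReal_ofReal h1t.le] at h2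
  have hDlow : d1 * ((1-t) * (X * Y)) ≤ D := by
    have h := nL (n := n) (i := i) hα ht1
    have h2 := ENNReal.toReal_mono hNtop h
    rw [ENNReal.toReal_mul, ENNReal.toReal_ofReal (by linarith : (0:ℝ) ≤ (1-t)/2)] at h2
    have h3 := hQl ((1+t)/2) (by linarith) (by linarith)
    rw [show 1 - (1+t)/2 = (1-t)/2 by ring] at h3
    rw [show ((1-t)/2)/2 = (1-t)/4 by ring] at h3
    rw [hquartα, hquartβ] at h3
    calc d1 * ((1-t) * (X * Y))
        = (1-t)/2 * (c1 * ((X * (1/4:ℝ)^α) * (Y * (1/4:ℝ)^((n:ℝ)/2)))) := by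
          rw [hd1_def]; ring
      _ ≤ (1-t)/2 * (alphaRadial (n+1) α
            {x : Vec (n+1) | (1+t)/2 < x i}).toReal := by
          apply mul_le_mul_of_nonneg_left h3 (by linarith)
      _ ≤ D := h2
  have hD0 : 0 ≤ D := ENNReal.toReal_nonneg
  -- conditional mean
  set M : ℝ := ∫ x in {x : Vec (n+1) | t < x i}, x i ∂(alphaRadial (n+1) α) with hM_def
  have hM : M = D + t * Q := by
    rw [hM_def, M_split hα, D_eq hα]
  have hgval : gAlphaPlus (n+1) α i t =
      Q * D * Real.sqrt (1 + (M / Q) ^ 2) := by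
    rw [gAlphaPlus, condCoordMean]
    rw [← hQ_def, ← hM_def]
    have hEt : M / Q - t = D / Q := by
      rw [hM]; field_simp; ring
    rw [hEt]
    field_simp
  have hE0 : 0 ≤ M / Q := by
    apply div_nonneg ?_ hQpos.le
    rw [hM]; nlinarith
  have hE1 : M / Q ≤ 1 := by
    rw [div_le_one hQpos, hM]
    nlinarith
  have hs1 : 1 ≤ Real.sqrt (1 + (M / Q) ^ 2) := by
    have h := Real.sqrt_le_sqrt (show (1:ℝ) ≤ 1 + (M / Q) ^ 2 by nlinarith)
    simpa using h
  have hs2 : Real.sqrt (1 + (M / Q) ^ 2) ≤ Real.sqrt 2 := by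
    apply Real.sqrt_le_sqrt
    nlinarith
  -- exponent identity
  have hpow : (X * Y) * ((1-t) * (X * Y)) = (1-t) ^ (2*α + ((n+1:ℕ):ℝ)) := by
    have hXY : X * Y = (1-t) ^ (α + (n:ℝ)/2) := (Real.rpow_add h1t α ((n:ℝ)/2)).symm
    have h2 : (1-t) * (1-t) ^ (α + (n:ℝ)/2) = (1-t) ^ (1 + (α + (n:ℝ)/2)) := by
      rw [Real.rpow_add h1t 1 (α + (n:ℝ)/2), Real.rpow_one]
    calc (X * Y) * ((1-t) * (X * Y))
        = (1-t) ^ (α + (n:ℝ)/2) * (1-t) ^ (1 + (α + (n:ℝ)/2)) := by rw [hXY, h2]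
      _ = (1-t) ^ ((α + (n:ℝ)/2) + (1 + (α + (n:ℝ)/2))) := (Real.rpow_add h1t _ _).symm
      _ = (1-t) ^ (2*α + ((n+1:ℕ):ℝ)) := by
          congr 1
          push_cast
          ring
  constructor
  · calc q1 * (c1 * (1/2) * (1/4:ℝ)^α * (1/4:ℝ)^((n:ℝ)/2)) * (1-t) ^ (2*α + ((n+1:ℕ):ℝ))
        = (q1 * (X * Y)) * (d1 * ((1-t) * (X * Y))) := by
          rw [← hpow, hd1_def]; ring
      _ ≤ Q * D := by
          apply mul_le_mul hQlow hDlow (by positivity) hQpos.le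
      _ = Q * D * 1 := by ring
      _ ≤ Q * D * Real.sqrt (1 + (M / Q) ^ 2) := by
          apply mul_le_mul_of_nonneg_left hs1 (by positivity)
      _ = gAlphaPlus (n+1) α i t := hgval.symm
  · calc gAlphaPlus (n+1) α i t = Q * D * Real.sqrt (1 + (M / Q) ^ 2) := hgval
      _ ≤ Q * D * Real.sqrt 2 := by
          apply mul_le_mul_of_nonneg_left hs2 (by positivity)
      _ ≤ (q2 * (X * Y)) * ((1-t) * (q2 * (X * Y))) * Real.sqrt 2 := by
          apply mul_le_mul_of_nonneg_right ?_ (Real.sqrt_nonneg 2)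
          apply mul_le_mul hQup ?_ hD0 (by positivity)
          calc D ≤ (1-t) * Q := hDup
            _ ≤ (1-t) * (q2 * (X * Y)) := mul_le_mul_of_nonneg_left hQup h1t.le
      _ = q2 * q2 * Real.sqrt 2 * (1-t) ^ (2*α + ((n+1:ℕ):ℝ)) := by
          rw [← hpow]; ring

end S12e


end AuxStatement12

/-- Proposition G.3: asymptotic behavior of the weight function. There
are `t₀ ∈ [0,1)` and positive constants `c_L(α,d), c_U(α,d)` such that for all
`t ∈ [t₀, 1)`, `c_L (1-t)^{2α+d} ≤ g_α^+(t) ≤ c_U (1-t)^{2α+d}`. -/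
theorem statement12 (d : ℕ) (hd : 1 < d) (α : ℝ) (hα : 0 < α) (i : Fin d) :
    ∃ t₀ ∈ Set.Ico (0 : ℝ) 1, ∃ cL : ℝ, 0 < cL ∧ ∃ cU : ℝ, 0 < cU ∧
      ∀ t ∈ Set.Ico t₀ 1,
        cL * (1 - t) ^ (2 * α + (d : ℝ)) ≤ gAlphaPlus d α i t ∧
          gAlphaPlus d α i t ≤ cU * (1 - t) ^ (2 * α + (d : ℝ)) := by
  obtain ⟨n, rfl⟩ : ∃ n, d = n + 1 := ⟨d - 1, by omega⟩
  obtain ⟨cL, hcL, cU, hcU, h⟩ := S12e.main n α hα i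
  exact ⟨1/2, ⟨by norm_num, by norm_num⟩, cL, hcL, cU, hcU, h⟩

end
end

section
/- For epsilon in (0, 1/2] and u in S^{d-1} (d > 1), define the thin spherical cap C(u, epsilon) = {x in B_1^d : u^T x > 1 - epsilon^2}, where B_1^d is the closed unit ball of R^d. Then there exist positive constants depending only on d and alpha such that the mass of the cap satisfies c_1(d, alpha) * epsilon^{d - 1 + 2 alpha} <= P_X(alpha)(C(u, epsilon)) <= c_2(d, alpha) * epsilon^{d - 1 + 2 alpha}. -/
open MeasureTheory
open Set
open scoped ENNReal RealInnerProductSpace NNReal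

noncomputable section

set_option maxHeartbeats 1000000

namespace S14

open Set

variable {n : ℕ}

/-- embedding of R^n into R^(n+1) as last n coordinates -/
def emb (n : ℕ) (y : EuclideanSpace ℝ (Fin n)) : Vec (n + 1) := WithLp.toLp 2 (fun i => Fin.cases (motive := fun _ => ℝ) 0 (fun j => y j) i)

/-- tail projection -/
def tl (n : ℕ) (x : Vec (n + 1)) : EuclideanSpace ℝ (Fin n) := WithLp.toLp 2 (fun j : Fin n => x j.succ)

def e0 (n : ℕ) : Vec (n + 1) := EuclideanSpace.single 0 1

@[simp] lemma emb_zero_co (y : EuclideanSpace ℝ (Fin n)) : emb n y 0 = 0 := rfl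
@[simp] lemma emb_succ_co (y : EuclideanSpace ℝ (Fin n)) (j : Fin n) : emb n y j.succ = y j := by
  simp [emb]
@[simp] lemma tl_co (x : Vec (n + 1)) (j : Fin n) : tl n x j = x j.succ := rfl

lemma norm_sq_eq {ι : Type} [Fintype ι] (x : EuclideanSpace ℝ ι) : ‖x‖ ^ 2 = ∑ i, x i ^ 2 := by
  rw [EuclideanSpace.norm_eq, Real.sq_sqrt (by positivity)]
  simp [sq_abs]

lemma coord_abs_le_norm {ι : Type} [Fintype ι] (y : EuclideanSpace ℝ ι) (i : ι) : |y i| ≤ ‖y‖ := by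
  have h1 : y i ^ 2 ≤ ‖y‖ ^ 2 := by
    rw [norm_sq_eq]
    exact Finset.single_le_sum (f := fun j => y j ^ 2) (fun j _ => sq_nonneg _)
      (Finset.mem_univ i)
  have := norm_nonneg y
  nlinarith [abs_nonneg (y i), sq_abs (y i)]

lemma norm_emb (y : EuclideanSpace ℝ (Fin n)) : ‖emb n y‖ = ‖y‖ := by
  have h : ‖emb n y‖ ^ 2 = ‖y‖ ^ 2 := by
    rw [norm_sq_eq, norm_sq_eq, Fin.sum_univ_succ]
    simp
  have h1 := norm_nonneg (emb n y); have h2 := norm_nonneg y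
  nlinarith

lemma emb_sub (y y' : EuclideanSpace ℝ (Fin n)) : emb n y - emb n y' = emb n (y - y') := by
  ext i
  induction i using Fin.cases <;> simp

@[simp] lemma inner_e0 (x : Vec (n + 1)) : ⟪e0 n, x⟫ = x 0 := by
  simp [e0, EuclideanSpace.inner_single_left]

@[simp] lemma norm_e0 : ‖e0 n‖ = 1 := by simp [e0]

lemma lipschitz_tl : LipschitzWith 1 (tl n) := by
  apply LipschitzWith.of_dist_le_mul
  intro x y
  rw [NNReal.coe_one, one_mul, EuclideanSpace.dist_eq, EuclideanSpace.dist_eq]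
  apply Real.sqrt_le_sqrt
  rw [Fin.sum_univ_succ (f := fun i => dist (x i) (y i) ^ 2)]
  have : (0:ℝ) ≤ dist (x 0) (y 0) ^ 2 := sq_nonneg _
  have hle : ∑ j : Fin n, dist (tl n x j) (tl n y j) ^ 2
      = ∑ j : Fin n, dist (x j.succ) (y j.succ) ^ 2 := rfl
  linarith [hle.le]

/-- the graph parametrization of the upper cap -/
def phi (n : ℕ) (y : EuclideanSpace ℝ (Fin n)) : Vec (n + 1) :=
  emb n y + Real.sqrt (1 - ‖y‖ ^ 2) • e0 n

lemma phi_zero_co (y : EuclideanSpace ℝ (Fin n)) : phi n y 0 = Real.sqrt (1 - ‖y‖ ^ 2) := by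
  have : phi n y 0 = emb n y 0 + Real.sqrt (1 - ‖y‖ ^ 2) * e0 n 0 := rfl
  rw [this]; simp [e0, EuclideanSpace.single_apply]

lemma phi_succ_co (y : EuclideanSpace ℝ (Fin n)) (j : Fin n) : phi n y j.succ = y j := by
  have : phi n y j.succ = emb n y j.succ + Real.sqrt (1 - ‖y‖ ^ 2) * e0 n j.succ := rfl
  rw [this]; simp [e0, EuclideanSpace.single_apply, Fin.succ_ne_zero]

lemma tl_phi (y : EuclideanSpace ℝ (Fin n)) : tl n (phi n y) = y := by
  ext j; simp [phi_succ_co]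

lemma inner_emb_e0 (y : EuclideanSpace ℝ (Fin n)) : ⟪emb n y, e0 n⟫ = 0 := by
  rw [real_inner_comm, inner_e0]; rfl

lemma norm_phi (y : EuclideanSpace ℝ (Fin n)) (h : ‖y‖ ≤ 1) : ‖phi n y‖ = 1 := by
  have h0 : (0:ℝ) ≤ 1 - ‖y‖ ^ 2 := by nlinarith [norm_nonneg y]
  have hsq : ‖phi n y‖ ^ 2 = 1 := by
    rw [phi, norm_add_sq_real]
    rw [real_inner_smul_right, inner_emb_e0, norm_smul, norm_e0, norm_emb]
    rw [Real.norm_eq_abs, abs_of_nonneg (Real.sqrt_nonneg _), mul_one,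
      Real.sq_sqrt h0]
    ring
  have := norm_nonneg (phi n y)
  nlinarith

lemma inner_e0_phi (y : EuclideanSpace ℝ (Fin n)) : ⟪e0 n, phi n y⟫ = Real.sqrt (1 - ‖y‖ ^ 2) := by
  rw [inner_e0, phi_zero_co]

lemma sqrt_diff_le {a b : ℝ} (ha : 1/2 ≤ a) (hb : 1/2 ≤ b) :
    |Real.sqrt a - Real.sqrt b| ≤ |a - b| := by
  have h7 : (0.7:ℝ) ≤ Real.sqrt a := by
    rw [show (0.7:ℝ) = Real.sqrt 0.49 by
      rw [show (0.49:ℝ) = 0.7^2 by norm_num, Real.sqrt_sq]; norm_num]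
    exact Real.sqrt_le_sqrt (by linarith)
  have h8 : (0.7:ℝ) ≤ Real.sqrt b := by
    rw [show (0.7:ℝ) = Real.sqrt 0.49 by
      rw [show (0.49:ℝ) = 0.7^2 by norm_num, Real.sqrt_sq]; norm_num]
    exact Real.sqrt_le_sqrt (by linarith)
  have ha2 : Real.sqrt a ^ 2 = a := Real.sq_sqrt (by linarith)
  have hb2 : Real.sqrt b ^ 2 = b := Real.sq_sqrt (by linarith)
  rcases le_total (Real.sqrt a) (Real.sqrt b) with h | h
  · rw [abs_of_nonpos (by linarith), abs_of_nonpos (by nlinarith)]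
    nlinarith
  · rw [abs_of_nonneg (by linarith), abs_of_nonneg (by nlinarith)]
    nlinarith

/-- domain of the Lipschitz parametrization -/
def Dom (n : ℕ) : Set (EuclideanSpace ℝ (Fin n)) := {y | ‖y‖ ^ 2 ≤ 1/2}

lemma lipschitzOn_phi : LipschitzOnWith 3 (phi n) (Dom n) := by
  apply LipschitzOnWith.of_dist_le_mul
  intro y hy y' hy'
  have hy1 : ‖y‖ ≤ 1 := by
    have := hy; rw [Dom, mem_setOf_eq] at this; nlinarith [norm_nonneg y]
  have hy1' : ‖y'‖ ≤ 1 := by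
    have := hy'; rw [Dom, mem_setOf_eq] at this; nlinarith [norm_nonneg y']
  rw [dist_eq_norm, dist_eq_norm]
  have hd : phi n y - phi n y' =
      emb n (y - y') + (Real.sqrt (1 - ‖y‖^2) - Real.sqrt (1 - ‖y'‖^2)) • e0 n := by
    rw [phi, phi, ← emb_sub]; module
  rw [hd]
  have h1 : ‖emb n (y - y') + (Real.sqrt (1 - ‖y‖^2) - Real.sqrt (1 - ‖y'‖^2)) • e0 n‖
      ≤ ‖y - y'‖ + |Real.sqrt (1 - ‖y‖^2) - Real.sqrt (1 - ‖y'‖^2)| := by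
    refine (norm_add_le _ _).trans ?_
    rw [norm_emb, norm_smul, norm_e0, mul_one, Real.norm_eq_abs]
  have h2 : |Real.sqrt (1 - ‖y‖^2) - Real.sqrt (1 - ‖y'‖^2)| ≤ 2 * ‖y - y'‖ := by
    have := sqrt_diff_le (a := 1 - ‖y‖^2) (b := 1 - ‖y'‖^2)
      (by have := hy; rw [Dom, mem_setOf_eq] at this; linarith)
      (by have := hy'; rw [Dom, mem_setOf_eq] at this; linarith)
    refine this.trans ?_
    have hn : |‖y'‖ - ‖y‖| ≤ ‖y - y'‖ := by
      rw [abs_sub_comm]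
      exact (abs_norm_sub_norm_le y y').trans (le_of_eq rfl)
    obtain ⟨hl, hr⟩ := abs_le.mp hn
    rw [abs_le]
    constructor <;> nlinarith [norm_nonneg y, norm_nonneg y', norm_nonneg (y - y')]
  calc _ ≤ ‖y - y'‖ + |Real.sqrt (1 - ‖y‖^2) - Real.sqrt (1 - ‖y'‖^2)| := h1
    _ ≤ ‖y - y'‖ + 2 * ‖y - y'‖ := by linarith
    _ = (3:ℝ≥0) * ‖y - y'‖ := by push_cast; ring

def capS (n : ℕ) (u : Vec (n + 1)) (δ : ℝ) : Set (Vec (n + 1)) :=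
  Metric.sphere 0 1 ∩ {x | 1 - δ < ⟪u, x⟫}

lemma capS_subset_sphere (u : Vec (n+1)) (δ : ℝ) : capS n u δ ⊆ Metric.sphere 0 1 :=
  inter_subset_left

lemma cb_subset_dom {δ : ℝ} (hδ0 : 0 < δ) (hδ : δ ≤ 1/4) :
    Metric.closedBall (0 : EuclideanSpace ℝ (Fin n)) (Real.sqrt (2*δ)) ⊆ Dom n := by
  intro y hy
  rw [Metric.mem_closedBall, dist_zero_right] at hy
  have h2 : ‖y‖^2 ≤ 2*δ := by
    nlinarith [Real.sq_sqrt (by positivity : (0:ℝ) ≤ 2*δ), norm_nonneg y,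
      Real.sqrt_nonneg (2*δ)]
  rw [Dom, mem_setOf_eq]; linarith

lemma tail_norm_sq (x : Vec (n + 1)) : ‖tl n x‖ ^ 2 = ‖x‖ ^ 2 - x 0 ^ 2 := by
  rw [norm_sq_eq, norm_sq_eq]
  have h : ∑ j : Fin n, tl n x j ^ 2 = ∑ j : Fin n, x j.succ ^ 2 := rfl
  rw [h, Fin.sum_univ_succ (f := fun i => x i ^ 2)]
  ring

lemma capS_subset_phi {δ : ℝ} (hδ0 : 0 < δ) (hδ : δ ≤ 1/4) :
    capS n (e0 n) δ ⊆ phi n '' (Metric.closedBall 0 (Real.sqrt (2*δ))) := by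
  rintro x ⟨hx1, hx2⟩
  rw [mem_sphere_zero_iff_norm] at hx1
  rw [mem_setOf_eq, inner_e0] at hx2
  have hx0pos : 0 < x 0 := by linarith
  have hx0le : x 0 ≤ 1 := by
    have h := coord_abs_le_norm x 0
    rw [hx1] at h
    exact (le_abs_self _).trans h
  set y := tl n x with hy
  have hynorm : ‖y‖^2 = 1 - x 0 ^ 2 := by rw [hy, tail_norm_sq, hx1]; norm_num
  have hyle : ‖y‖^2 ≤ 2*δ := by nlinarith
  refine ⟨y, ?_, ?_⟩
  · rw [Metric.mem_closedBall, dist_zero_right]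
    exact Real.le_sqrt_of_sq_le hyle
  · ext i
    induction i using Fin.cases with
    | zero =>
      rw [phi_zero_co, hynorm]
      have : (1 : ℝ) - (1 - x 0 ^ 2) = x 0 ^ 2 := by ring
      rw [this, Real.sqrt_sq hx0pos.le]
    | succ j => rw [phi_succ_co]; rfl

lemma ball_subset_tl_capS {δ : ℝ} (hδ0 : 0 < δ) (hδ : δ ≤ 1/4) :
    Metric.ball (0 : EuclideanSpace ℝ (Fin n)) (Real.sqrt δ) ⊆ tl n '' capS n (e0 n) δ := by
  intro y hy
  rw [Metric.mem_ball, dist_zero_right] at hy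
  have hysq : ‖y‖^2 < δ := by
    nlinarith [Real.sq_sqrt hδ0.le, norm_nonneg y, Real.sqrt_nonneg δ]
  have hy1 : ‖y‖ ≤ 1 := by nlinarith [norm_nonneg y]
  refine ⟨phi n y, ⟨?_, ?_⟩, tl_phi y⟩
  · rw [mem_sphere_zero_iff_norm]; exact norm_phi y hy1
  · rw [mem_setOf_eq, inner_e0, phi_zero_co]
    have h1 : 1 - δ < 1 - ‖y‖^2 := by linarith
    have h2 : (1 - ‖y‖^2) ≤ Real.sqrt (1 - ‖y‖^2) :=
      (Real.le_sqrt (by nlinarith) (by nlinarith)).mpr (by nlinarith)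
    linarith

lemma hausdorff_pi_eq : (μH[(n:ℝ)] : Measure (Fin n → ℝ)) = volume := by
  simpa using hausdorffMeasure_pi_real (ι := Fin n)

def K2 (n : ℕ) : ℝ≥0 := (Fintype.card (Fin n) : ℝ≥0) ^ ((1:ℝ≥0∞) / 2).toReal

lemma lip_ofLp : LipschitzWith 1 ⇑(WithLp.equiv 2 (Fin n → ℝ)) :=
  PiLp.lipschitzWith_ofLp 2 _

lemma lip_toLp : LipschitzWith (K2 n) ⇑(WithLp.equiv 2 (Fin n → ℝ)).symm :=
  AntilipschitzWith.to_rightInverse (PiLp.antilipschitzWith_ofLp 2 _)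
    (fun z => (WithLp.equiv 2 (Fin n → ℝ)).apply_symm_apply z)

lemma pi_ball_subset (hn : 0 < n) {δ : ℝ} (hδ0 : 0 < δ) :
    Metric.ball (0 : Fin n → ℝ) (Real.sqrt δ / Real.sqrt n) ⊆
      ⇑(WithLp.equiv 2 (Fin n → ℝ)) '' (Metric.ball (0 : EuclideanSpace ℝ (Fin n)) (Real.sqrt δ)) := by
  intro z hz
  rw [Metric.mem_ball, dist_zero_right] at hz
  have hr : (0:ℝ) < Real.sqrt δ / Real.sqrt n := by
    apply div_pos (Real.sqrt_pos.mpr hδ0) (Real.sqrt_pos.mpr (by exact_mod_cast hn))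
  have hco : ∀ i, |z i| < Real.sqrt δ / Real.sqrt n := by
    intro i
    have := (pi_norm_lt_iff hr).mp hz i
    simpa [Real.norm_eq_abs] using this
  set y : EuclideanSpace ℝ (Fin n) := (WithLp.equiv 2 (Fin n → ℝ)).symm z
  have hyco : ∀ i, y i = z i := fun i => rfl
  have hsum : ∑ i, y i ^ 2 < δ := by
    have hlt : ∀ i ∈ Finset.univ, y i ^ 2 < δ / n := by
      intro i _
      rw [hyco i]
      have h1 : |z i| ^ 2 < (Real.sqrt δ / Real.sqrt n) ^ 2 :=
        pow_lt_pow_left₀ (hco i) (abs_nonneg _) (by norm_num)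
      have h2 : (Real.sqrt δ / Real.sqrt n) ^ 2 = δ / n := by
        rw [div_pow, Real.sq_sqrt hδ0.le, Real.sq_sqrt (by positivity)]
      rw [← sq_abs]
      rw [h2] at h1; exact h1
    have := Finset.sum_lt_sum_of_nonempty (Finset.univ_nonempty_iff.mpr ⟨⟨0, hn⟩⟩) hlt
    rw [Finset.sum_const, Finset.card_univ, Fintype.card_fin, nsmul_eq_mul] at this
    have hne : (n:ℝ) ≠ 0 := by exact_mod_cast hn.ne'
    rw [mul_div_cancel₀ _ hne] at this
    exact this
  refine ⟨y, ?_, (WithLp.equiv 2 (Fin n → ℝ)).apply_symm_apply z⟩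
  rw [Metric.mem_ball, dist_zero_right]
  rw [← Real.sqrt_sq (norm_nonneg y), norm_sq_eq]
  exact Real.sqrt_lt_sqrt (by positivity) hsum

lemma cbE_subset {r : ℝ} (hr : 0 ≤ r) :
    Metric.closedBall (0 : EuclideanSpace ℝ (Fin n)) r ⊆
      ⇑(WithLp.equiv 2 (Fin n → ℝ)).symm '' (Metric.closedBall (0 : Fin n → ℝ) r) := by
  intro y hy
  rw [Metric.mem_closedBall, dist_zero_right] at hy
  refine ⟨WithLp.equiv 2 (Fin n → ℝ) y, ?_, (WithLp.equiv 2 (Fin n → ℝ)).symm_apply_apply y⟩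
  rw [Metric.mem_closedBall, dist_zero_right]
  rw [pi_norm_le_iff_of_nonneg hr]
  intro i
  have : (WithLp.equiv 2 (Fin n → ℝ)) y i = y i := rfl
  rw [Real.norm_eq_abs, this]
  exact (coord_abs_le_norm y i).trans hy

lemma cap_e0_lower (hn : 0 < n) {δ : ℝ} (hδ0 : 0 < δ) (hδ : δ ≤ 1/4) :
    ENNReal.ofReal ((2 * (Real.sqrt δ / Real.sqrt n)) ^ n) ≤ μH[(n:ℝ)] (capS n (e0 n) δ) := by
  have hr : (0:ℝ) < Real.sqrt δ / Real.sqrt n :=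
    div_pos (Real.sqrt_pos.mpr hδ0) (Real.sqrt_pos.mpr (by exact_mod_cast hn))
  calc ENNReal.ofReal ((2 * (Real.sqrt δ / Real.sqrt n)) ^ n)
      = volume (Metric.ball (0 : Fin n → ℝ) (Real.sqrt δ / Real.sqrt n)) := by
        rw [Real.volume_pi_ball _ hr, Fintype.card_fin]
    _ = μH[(n:ℝ)] (Metric.ball (0 : Fin n → ℝ) (Real.sqrt δ / Real.sqrt n)) := by
        rw [hausdorff_pi_eq]
    _ ≤ μH[(n:ℝ)] (⇑(WithLp.equiv 2 (Fin n → ℝ)) ''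
          (Metric.ball (0 : EuclideanSpace ℝ (Fin n)) (Real.sqrt δ))) :=
        measure_mono (pi_ball_subset hn hδ0)
    _ ≤ μH[(n:ℝ)] (Metric.ball (0 : EuclideanSpace ℝ (Fin n)) (Real.sqrt δ)) := by
        simpa using lip_ofLp.hausdorffMeasure_image_le (by positivity : (0:ℝ) ≤ (n:ℝ))
          (Metric.ball (0 : EuclideanSpace ℝ (Fin n)) (Real.sqrt δ))
    _ ≤ μH[(n:ℝ)] (tl n '' capS n (e0 n) δ) := measure_mono (ball_subset_tl_capS hδ0 hδ)
    _ ≤ μH[(n:ℝ)] (capS n (e0 n) δ) := by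
        simpa using lipschitz_tl.hausdorffMeasure_image_le (by positivity : (0:ℝ) ≤ (n:ℝ))
          (capS n (e0 n) δ)

lemma cap_e0_upper (hn : 0 < n) {δ : ℝ} (hδ0 : 0 < δ) (hδ : δ ≤ 1/4) :
    μH[(n:ℝ)] (capS n (e0 n) δ) ≤
      (((3:ℝ≥0):ℝ≥0∞) ^ (n:ℝ)) * ((K2 n : ℝ≥0∞) ^ (n:ℝ)) *
        ENNReal.ofReal ((2 * Real.sqrt (2*δ)) ^ n) := by
  have hs : (0:ℝ) ≤ Real.sqrt (2*δ) := Real.sqrt_nonneg _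
  calc μH[(n:ℝ)] (capS n (e0 n) δ)
      ≤ μH[(n:ℝ)] (phi n '' Metric.closedBall 0 (Real.sqrt (2*δ))) :=
        measure_mono (capS_subset_phi hδ0 hδ)
    _ ≤ ((3:ℝ≥0):ℝ≥0∞) ^ (n:ℝ) * μH[(n:ℝ)] (Metric.closedBall
          (0 : EuclideanSpace ℝ (Fin n)) (Real.sqrt (2*δ))) :=
        (lipschitzOn_phi.mono (cb_subset_dom hδ0 hδ)).hausdorffMeasure_image_le
          (by positivity : (0:ℝ) ≤ (n:ℝ))
    _ ≤ ((3:ℝ≥0):ℝ≥0∞) ^ (n:ℝ) * μH[(n:ℝ)] (⇑(WithLp.equiv 2 (Fin n → ℝ)).symm ''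
          (Metric.closedBall (0 : Fin n → ℝ) (Real.sqrt (2*δ)))) := by
        gcongr
        exact cbE_subset hs
    _ ≤ ((3:ℝ≥0):ℝ≥0∞) ^ (n:ℝ) * ((K2 n : ℝ≥0∞) ^ (n:ℝ) *
          μH[(n:ℝ)] (Metric.closedBall (0 : Fin n → ℝ) (Real.sqrt (2*δ)))) := by
        gcongr
        exact lip_toLp.hausdorffMeasure_image_le (by positivity : (0:ℝ) ≤ (n:ℝ)) _
    _ = (((3:ℝ≥0):ℝ≥0∞) ^ (n:ℝ)) * ((K2 n : ℝ≥0∞) ^ (n:ℝ)) *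
        ENNReal.ofReal ((2 * Real.sqrt (2*δ)) ^ n) := by
        rw [hausdorff_pi_eq, Real.volume_pi_closedBall _ hs, Fintype.card_fin, mul_assoc]

lemma capS_image (u : Vec (n + 1)) (hu : ‖u‖ = 1) (δ : ℝ) :
    capS n u δ = (Submodule.reflection (ℝ ∙ (e0 n - u))ᗮ) '' capS n (e0 n) δ := by
  set R : Vec (n+1) ≃ₗᵢ[ℝ] Vec (n+1) := Submodule.reflection (ℝ ∙ (e0 n - u))ᗮ with hRdef
  have hR : R (e0 n) = u := Submodule.reflection_sub (by rw [norm_e0, hu])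
  ext x
  constructor
  · rintro ⟨hx1, hx2⟩
    refine ⟨R x, ⟨?_, ?_⟩, Submodule.reflection_reflection _ x⟩
    · rw [mem_sphere_zero_iff_norm] at hx1 ⊢
      rw [R.norm_map, hx1]
    · rw [mem_setOf_eq]
      have : ⟪e0 n, R x⟫ = ⟪R (e0 n), R (R x)⟫ := (R.inner_map_map (e0 n) (R x)).symm
      rw [this, hR, Submodule.reflection_reflection]
      exact hx2
  · rintro ⟨z, ⟨hz1, hz2⟩, rfl⟩
    constructor
    · rw [mem_sphere_zero_iff_norm] at hz1 ⊢
      rw [R.norm_map, hz1]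
    · rw [mem_setOf_eq, ← hR, R.inner_map_map]
      exact hz2

lemma cap_congr (u : Vec (n + 1)) (hu : ‖u‖ = 1) (δ : ℝ) :
    μH[(n:ℝ)] (capS n u δ) = μH[(n:ℝ)] (capS n (e0 n) δ) := by
  rw [capS_image u hu δ]
  exact (Submodule.reflection (ℝ ∙ (e0 n - u))ᗮ).isometry.hausdorffMeasure_image
    (Or.inl (by positivity)) _

def aC (n : ℕ) : ℝ≥0∞ := ENNReal.ofReal ((2 / Real.sqrt n) ^ n)
def CC (n : ℕ) : ℝ≥0∞ :=
  (((3:ℝ≥0):ℝ≥0∞) ^ (n:ℝ)) * ((K2 n : ℝ≥0∞) ^ (n:ℝ)) * ENNReal.ofReal ((2 * Real.sqrt 2) ^ n)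

lemma aC_pos (hn : 0 < n) : 0 < aC n := by
  rw [aC]
  apply ENNReal.ofReal_pos.mpr
  have : (0:ℝ) < Real.sqrt n := Real.sqrt_pos.mpr (by exact_mod_cast hn)
  positivity

lemma aC_lt_top : aC n < ⊤ := ENNReal.ofReal_lt_top

lemma CC_pos (hn : 0 < n) : 0 < CC n := by
  rw [CC]
  apply ENNReal.mul_pos
  · apply mul_ne_zero
    · exact (ENNReal.rpow_pos (by norm_num) (by norm_num)).ne'
    · apply (ENNReal.rpow_pos _ ENNReal.coe_ne_top).ne'
      rw [K2]
      have h : (0:ℝ≥0) < (Fintype.card (Fin n) : ℝ≥0) ^ ((1:ℝ≥0∞) / 2).toReal := by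
        apply NNReal.rpow_pos
        rw [Fintype.card_fin]
        exact_mod_cast hn
      exact_mod_cast h
  · exact (ENNReal.ofReal_pos.mpr (by positivity)).ne'

lemma CC_lt_top : CC n < ⊤ := by
  rw [CC]
  apply ENNReal.mul_lt_top
  apply ENNReal.mul_lt_top
  · exact ENNReal.rpow_lt_top_of_nonneg (by positivity) ENNReal.coe_ne_top
  · exact ENNReal.rpow_lt_top_of_nonneg (by positivity) ENNReal.coe_ne_top
  · exact ENNReal.ofReal_lt_top

lemma cap_lower (hn : 0 < n) (u : Vec (n + 1)) (hu : ‖u‖ = 1) {δ : ℝ}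
    (hδ0 : 0 < δ) (hδ : δ ≤ 1/4) :
    aC n * ENNReal.ofReal (Real.sqrt δ ^ n) ≤ μH[(n:ℝ)] (capS n u δ) := by
  rw [cap_congr u hu δ]
  refine le_trans (le_of_eq ?_) (cap_e0_lower hn hδ0 hδ)
  rw [aC, ← ENNReal.ofReal_mul (by positivity)]
  congr 1
  rw [← mul_pow]
  ring

lemma cap_upper (hn : 0 < n) (u : Vec (n + 1)) (hu : ‖u‖ = 1) {δ : ℝ}
    (hδ0 : 0 < δ) (hδ : δ ≤ 1/4) :
    μH[(n:ℝ)] (capS n u δ) ≤ CC n * ENNReal.ofReal (Real.sqrt δ ^ n) := by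
  rw [cap_congr u hu δ]
  refine le_trans (cap_e0_upper hn hδ0 hδ) (le_of_eq ?_)
  have h1 : ENNReal.ofReal ((2 * Real.sqrt (2*δ)) ^ n)
      = ENNReal.ofReal ((2 * Real.sqrt 2) ^ n) * ENNReal.ofReal (Real.sqrt δ ^ n) := by
    rw [← ENNReal.ofReal_mul (by positivity)]
    congr 1
    rw [Real.sqrt_mul (by norm_num : (0:ℝ) ≤ 2), ← mul_pow]
    ring_nf
  rw [h1, CC]
  ring

lemma sphere_pos (hn : 0 < n) : 0 < μH[(n:ℝ)] (Metric.sphere (0 : Vec (n+1)) 1) := by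
  have h1 := cap_e0_lower (n := n) hn (δ := 1/4) (by norm_num) (by norm_num)
  refine lt_of_lt_of_le ?_ (h1.trans (measure_mono (capS_subset_sphere _ _)))
  apply ENNReal.ofReal_pos.mpr
  have : (0:ℝ) < Real.sqrt (1/4) := Real.sqrt_pos.mpr (by norm_num)
  have h2 : (0:ℝ) < Real.sqrt n := Real.sqrt_pos.mpr (by exact_mod_cast hn)
  positivity

lemma sphere_lt_top (hn : 0 < n) : μH[(n:ℝ)] (Metric.sphere (0 : Vec (n+1)) 1) < ⊤ := by
  set S := Metric.sphere (0 : Vec (n+1)) 1 with hS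
  have hcomp : IsCompact S := isCompact_sphere 0 1
  have hopen : ∀ z : S, IsOpen {x : Vec (n+1) | 1 - (1/4:ℝ) < ⟪(z : Vec (n+1)), x⟫} :=
    fun z => isOpen_lt continuous_const (Continuous.inner continuous_const continuous_id)
  have hcover : S ⊆ ⋃ z : S, {x : Vec (n+1) | 1 - (1/4:ℝ) < ⟪(z : Vec (n+1)), x⟫} := by
    intro x hx
    refine mem_iUnion.mpr ⟨⟨x, hx⟩, ?_⟩
    rw [mem_setOf_eq, real_inner_self_eq_norm_sq]
    rw [hS, mem_sphere_zero_iff_norm] at hx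
    rw [hx]; norm_num
  obtain ⟨t, ht⟩ := hcomp.elim_finite_subcover _ hopen hcover
  have hle : μH[(n:ℝ)] S ≤ ∑ z ∈ t, μH[(n:ℝ)] (capS n (z : Vec (n+1)) (1/4)) := by
    refine le_trans (measure_mono ?_) (measure_biUnion_finset_le _ _)
    intro x hx
    obtain ⟨z, hz1, hz2⟩ := mem_iUnion₂.mp (ht hx)
    exact mem_iUnion₂.mpr ⟨z, hz1, hx, hz2⟩
  refine lt_of_le_of_lt hle ?_
  refine lt_of_le_of_lt (Finset.sum_le_sum (fun z _ => cap_upper hn (z : Vec (n+1))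
    (by rw [← mem_sphere_zero_iff_norm]; exact z.2) (by norm_num) (by norm_num))) ?_
  rw [Finset.sum_const, nsmul_eq_mul]
  exact ENNReal.mul_lt_top (by simp)
    (ENNReal.mul_lt_top CC_lt_top ENNReal.ofReal_lt_top)


end S14

/-- Lemma H.2: mass of a thin spherical cap. For `ε ∈ (0, 1/2]` and a
unit vector `u`, the cap `C(u,ε) = {x ∈ B_1^d : uᵀx > 1 - ε²}` has `P_X(α)`-mass comparable
to `ε^{d-1+2α}`, with constants depending only on `d` and `α`. -/
theorem statement14 (d : ℕ) (hd : 1 < d) (α : ℝ) (hα : 0 < α) :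
    ∃ c₁ : ℝ, 0 < c₁ ∧ ∃ c₂ : ℝ, 0 < c₂ ∧
      ∀ ε : ℝ, 0 < ε → ε ≤ 1 / 2 →
      ∀ u : Vec d, ‖u‖ = 1 →
        c₁ * ε ^ ((d : ℝ) - 1 + 2 * α) ≤ (alphaRadial d α (cap u ε)).toReal ∧
          (alphaRadial d α (cap u ε)).toReal ≤ c₂ * ε ^ ((d : ℝ) - 1 + 2 * α) := by
  obtain ⟨n, rfl⟩ : ∃ n, d = n + 1 := ⟨d - 1, (Nat.succ_pred_eq_of_pos (by omega)).symm⟩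
  have hn : 0 < n := by omega
  have hα2 : (0:ℝ) < 1/α := by positivity
  have hexp : ((n+1:ℕ):ℝ) - 1 = (n:ℝ) := by push_cast; ring
  set S : Set (Vec (n+1)) := Metric.sphere 0 1 with hSdef
  have hSmeas : MeasurableSet S := Metric.isClosed_sphere.measurableSet
  set s := μH[(n:ℝ)] S with hsdef
  have hs0 : 0 < s := S14.sphere_pos hn
  have hst : s < ⊤ := S14.sphere_lt_top hn
  have hσ : sphereUnif (n+1) = s⁻¹ • (μH[(n:ℝ)]).restrict S := by
    rw [sphereUnif, hexp]
  have hσap : ∀ A : Set (Vec (n+1)), sphereUnif (n+1) A = s⁻¹ * μH[(n:ℝ)] (A ∩ S) := by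
    intro A
    rw [hσ, Measure.smul_apply, Measure.restrict_apply' hSmeas, smul_eq_mul]
  haveI : IsFiniteMeasure (sphereUnif (n+1)) := by
    constructor
    rw [hσap univ, univ_inter, ← hsdef, ENNReal.inv_mul_cancel hs0.ne' hst.ne]
    exact ENNReal.one_lt_top
  set F : ℝ × Vec (n+1) → Vec (n+1) := fun p => (1 - (1 - p.1) ^ (1/α)) • p.2 with hF
  have hFc : Continuous F := by
    apply Continuous.fun_smul
    · exact continuous_const.sub
        ((Real.continuous_rpow_const hα2.le).comp (continuous_const.sub continuous_fst))
    · exact continuous_snd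
  set P := (volume.restrict (Set.Icc (0:ℝ) 1)).prod (sphereUnif (n+1)) with hP
  have hsmul : ∀ (r : ℝ) (x : Vec (n+1)), F (r, x) = (1 - (1 - r) ^ (1/α)) • x :=
    fun _ _ => rfl
  -- real constants
  set sR := s.toReal with hsR
  have hsRpos : 0 < sR := ENNReal.toReal_pos hs0.ne' hst.ne
  set aR := (S14.aC n).toReal with haR
  have haRpos : 0 < aR := ENNReal.toReal_pos (S14.aC_pos hn).ne' S14.aC_lt_top.ne
  set CR := (S14.CC n).toReal with hCR
  have hCRpos : 0 < CR := ENNReal.toReal_pos (S14.CC_pos hn).ne' S14.CC_lt_top.ne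
  have haE : S14.aC n = ENNReal.ofReal aR := (ENNReal.ofReal_toReal S14.aC_lt_top.ne).symm
  have hCE : S14.CC n = ENNReal.ofReal CR := (ENNReal.ofReal_toReal S14.CC_lt_top.ne).symm
  have hsinv : s⁻¹ = ENNReal.ofReal sR⁻¹ := by
    rw [ENNReal.ofReal_inv_of_pos hsRpos, ENNReal.ofReal_toReal hst.ne]
  refine ⟨sR⁻¹ * aR * ((1/4:ℝ)^α * ((Real.sqrt 2)^n)⁻¹), by positivity,
    sR⁻¹ * CR, by positivity, ?_⟩
  intro ε hε hε2 u hu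
  set β : ℝ := ((n+1:ℕ):ℝ) - 1 + 2*α with hβ
  have hβeq : β = (n:ℝ) + 2*α := by rw [hβ]; push_cast; ring
  have hεβ : ε ^ β = ε ^ n * ε ^ (2*α) := by
    rw [hβeq, Real.rpow_add hε, Real.rpow_natCast]
  have hcapA : MeasurableSet (cap u ε) := by
    have hcapeq : cap u ε = Metric.closedBall (0 : Vec (n+1)) 1 ∩ {x | 1 - ε^2 < ⟪u, x⟫} := by
      ext x; simp [cap, mem_setOf_eq, Set.mem_inter_iff]
    rw [hcapeq]
    exact measurableSet_closedBall.inter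
      (isOpen_lt continuous_const (Continuous.inner continuous_const continuous_id)).measurableSet
  have hmc : alphaRadial (n+1) α (cap u ε) = P (F ⁻¹' (cap u ε)) := by
    rw [alphaRadial]
    exact Measure.map_apply hFc.measurable hcapA
  -- basic numeric facts
  have hε2a_pos : (0:ℝ) < ε ^ (2*α) := Real.rpow_pos_of_pos hε _
  have hε2a_le1 : ε ^ (2*α) ≤ 1 :=
    Real.rpow_le_one hε.le (by linarith) (by positivity)
  have hεsq14 : ε^2 ≤ 1/4 := by nlinarith
  have key1 : ∀ a b : ℝ, 1 - ε^2/4 < a → 1 - ε^2/2 < b → b ≤ 1 → 1 - ε^2 < a * b := by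
    intro a b h1 h2 h3
    have h0 : (0:ℝ) ≤ 1 - ε^2/4 := by nlinarith
    have h0' : (0:ℝ) ≤ 1 - ε^2/2 := by nlinarith
    nlinarith [mul_lt_mul'' h1 h2 h0 h0']
  -- ===== upper bound =====
  have hnull : P ((Set.Icc (0:ℝ) 1 ×ˢ S)ᶜ) = 0 := by
    rw [Set.compl_prod_eq_union]
    apply measure_union_null
    · rw [hP, Measure.prod_prod, Measure.restrict_apply' measurableSet_Icc,
        compl_inter_self, measure_empty, zero_mul]
    · rw [hP, Measure.prod_prod, hσap, compl_inter_self, measure_empty, mul_zero, mul_zero]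
  have hPeq : P (F ⁻¹' (cap u ε)) = P (F ⁻¹' (cap u ε) ∩ (Set.Icc (0:ℝ) 1 ×ˢ S)) := by
    apply le_antisymm
    · refine le_trans (measure_le_inter_add_diff P _ (Set.Icc (0:ℝ) 1 ×ˢ S)) ?_
      rw [measure_mono_null (diff_subset_compl _ _) hnull, add_zero]
    · exact measure_mono inter_subset_left
  have hsub : F ⁻¹' (cap u ε) ∩ (Set.Icc (0:ℝ) 1 ×ˢ S) ⊆
      (Set.Ioi (1 - ε ^ (2*α)) ×ˢ {x : Vec (n+1) | 1 - ε^2 < ⟪u, x⟫}) := by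
    rintro ⟨r, x⟩ ⟨hpre, hr, hx⟩
    have hxn : ‖x‖ = 1 := mem_sphere_zero_iff_norm.mp hx
    obtain ⟨hr0, hr1⟩ := hr
    have h1r : (0:ℝ) ≤ 1 - r := by linarith
    obtain ⟨h, hh⟩ : ∃ t : ℝ, t = 1 - (1 - r) ^ (1/α) := ⟨_, rfl⟩
    have hh0 : 0 ≤ h := by
      rw [hh]
      have : (1 - r) ^ (1/α) ≤ 1 := Real.rpow_le_one h1r (by linarith) hα2.le
      linarith
    have hh1 : h ≤ 1 := by
      rw [hh]
      have : 0 ≤ (1 - r) ^ (1/α) := Real.rpow_nonneg h1r _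
      linarith
    have hFrx : F (r, x) = (1 - (1 - r) ^ (1/α)) • x := rfl
    have hpre' : F (r, x) ∈ cap u ε := hpre
    rw [cap, mem_setOf_eq, hFrx] at hpre'
    obtain ⟨hb, hip⟩ := hpre'
    rw [real_inner_smul_right, ← hh] at hip
    have hiple : ⟪u, x⟫ ≤ 1 := by
      have := real_inner_le_norm u x
      rw [hu, hxn] at this; linarith
    have hppos : 1 - ε^2 ≥ 3/4 := by nlinarith
    have hipos : 0 < ⟪u, x⟫ := by nlinarith
    have hA : 1 - ε^2 < ⟪u, x⟫ := by nlinarith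
    have hhgt : 1 - ε^2 < h := by nlinarith
    have hB : 1 - ε ^ (2*α) < r := by
      have hlt : (1 - r) ^ (1/α) < ε^2 := by rw [hh] at hhgt; linarith
      have hlt2 : ((1 - r) ^ (1/α)) ^ α < (ε^2) ^ α :=
        Real.rpow_lt_rpow (Real.rpow_nonneg h1r _) hlt hα
      have hL : ((1 - r) ^ (1/α)) ^ α = 1 - r := by
        rw [← Real.rpow_mul h1r, one_div, inv_mul_cancel₀ hα.ne', Real.rpow_one]
      have hR : (ε^2 : ℝ) ^ α = ε ^ (2*α) := by
        rw [← Real.rpow_natCast ε 2, ← Real.rpow_mul hε.le]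
        norm_num
      rw [hL, hR] at hlt2
      linarith
    exact ⟨hB, hA⟩
  have hIoc : Set.Ioi (1 - ε ^ (2*α)) ∩ Set.Icc (0:ℝ) 1 = Set.Ioc (1 - ε ^ (2*α)) 1 := by
    ext x
    simp only [mem_inter_iff, mem_Ioi, mem_Icc, mem_Ioc]
    constructor
    · rintro ⟨h1, _, h3⟩; exact ⟨h1, h3⟩
    · rintro ⟨h1, h2⟩; exact ⟨h1, by nlinarith, h2⟩
  have hUP : alphaRadial (n+1) α (cap u ε) ≤
      ENNReal.ofReal ((sR⁻¹ * CR) * ε ^ β) := by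
    rw [hmc, hPeq]
    refine le_trans (measure_mono hsub) ?_
    rw [hP, Measure.prod_prod, Measure.restrict_apply' measurableSet_Icc, hIoc,
      Real.volume_Ioc, hσap]
    have hcs : {x : Vec (n+1) | 1 - ε^2 < ⟪u, x⟫} ∩ S = S14.capS n u (ε^2) := by
      rw [S14.capS, inter_comm]
    rw [hcs]
    refine le_trans (mul_le_mul_right (mul_le_mul_right
      (S14.cap_upper hn u hu (pow_pos hε 2) hεsq14) _) _) ?_
    rw [Real.sqrt_sq hε.le, hCE, hsinv,
      ← ENNReal.ofReal_mul (le_of_lt hCRpos),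
      ← ENNReal.ofReal_mul (inv_nonneg.mpr (le_of_lt hsRpos)),
      ← ENNReal.ofReal_mul (by linarith [hε2a_pos] : (0:ℝ) ≤ 1 - (1 - ε ^ (2*α)))]
    apply ENNReal.ofReal_le_ofReal
    apply le_of_eq
    have h1e : 1 - (1 - ε ^ (2*α)) = ε ^ (2*α) := by ring
    rw [h1e, hεβ]
    ring
  -- ===== lower bound =====
  have hq4 : (0:ℝ) < (ε^2/4) := by positivity
  have hq4le : (ε^2/4) ≤ 1 := by nlinarith
  have hrpow1 : (0:ℝ) < (ε^2/4) ^ α := Real.rpow_pos_of_pos hq4 _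
  have hrpowle : (ε^2/4) ^ α ≤ 1 := Real.rpow_le_one hq4.le hq4le hα.le
  have hrect : Set.Ioc (1 - (ε^2/4)^α) 1 ×ˢ S14.capS n u (ε^2/2) ⊆ F ⁻¹' (cap u ε) := by
    rintro ⟨r, x⟩ ⟨hr, hx⟩
    obtain ⟨hr0, hr1⟩ := hr
    obtain ⟨hxs, hxip⟩ := hx
    have hxn : ‖x‖ = 1 := mem_sphere_zero_iff_norm.mp hxs
    rw [mem_setOf_eq] at hxip
    have h1r : (0:ℝ) ≤ 1 - r := by linarith
    obtain ⟨h, hh⟩ : ∃ t : ℝ, t = 1 - (1 - r) ^ (1/α) := ⟨_, rfl⟩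
    have hh1 : h ≤ 1 := by
      rw [hh]
      have : 0 ≤ (1 - r) ^ (1/α) := Real.rpow_nonneg h1r _
      linarith
    have hhgt : 1 - ε^2/4 < h := by
      have hlt : (1 - r) < (ε^2/4) ^ α := by linarith
      rcases eq_or_lt_of_le h1r with heq | hpos
      · rw [hh, ← heq, Real.zero_rpow (by positivity : (1:ℝ)/α ≠ 0)]
        nlinarith
      · have hlt2 : (1 - r) ^ (1/α) < ((ε^2/4) ^ α) ^ (1/α) :=
          Real.rpow_lt_rpow h1r hlt hα2
        have hL : ((ε^2/4) ^ α) ^ (1/α) = ε^2/4 := by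
          rw [← Real.rpow_mul hq4.le, one_div, mul_inv_cancel₀ hα.ne', Real.rpow_one]
        rw [hL] at hlt2
        rw [hh]; linarith
    have hiple : ⟪u, x⟫ ≤ 1 := by
      have := real_inner_le_norm u x
      rw [hu, hxn] at this; linarith
    have hx2 : 1 - ε^2/2 < ⟪u, x⟫ := hxip
    have hF1 : F (r, x) = h • x := by rw [hsmul, hh]
    constructor
    · rw [mem_closedBall_zero_iff]
      rw [hF1, norm_smul, hxn, mul_one, Real.norm_eq_abs,
        abs_of_nonneg (by nlinarith [hεsq14, hhgt] : (0:ℝ) ≤ h)]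
      exact hh1
    · have hF2 : ⟪u, F (r, x)⟫ = h * ⟪u, x⟫ := by
        rw [hF1, real_inner_smul_right]
      rw [hF2]
      exact key1 h ⟪u, x⟫ hhgt hx2 hiple
  have hIoc2 : Set.Ioc (1 - (ε^2/4)^α) 1 ∩ Set.Icc (0:ℝ) 1 = Set.Ioc (1 - (ε^2/4)^α) 1 := by
    apply inter_eq_self_of_subset_left
    rintro x ⟨h1, h2⟩
    exact ⟨by nlinarith, h2⟩
  have hcapSS : S14.capS n u (ε^2/2) ∩ S = S14.capS n u (ε^2/2) :=
    inter_eq_self_of_subset_left (S14.capS_subset_sphere u _)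
  have hsqrt2 : Real.sqrt (ε^2/2) = ε / Real.sqrt 2 := by
    rw [Real.sqrt_div (sq_nonneg ε) 2, Real.sqrt_sq hε.le]
  have hLO : ENNReal.ofReal ((sR⁻¹ * aR * ((1/4:ℝ)^α * ((Real.sqrt 2)^n)⁻¹)) * ε ^ β) ≤
      alphaRadial (n+1) α (cap u ε) := by
    rw [hmc]
    refine le_trans ?_ (measure_mono hrect)
    rw [hP, Measure.prod_prod, Measure.restrict_apply' measurableSet_Icc, hIoc2,
      Real.volume_Ioc, hσap, hcapSS]
    refine le_trans ?_ (mul_le_mul_right (mul_le_mul_right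
      (S14.cap_lower hn u hu (by positivity) (by nlinarith)) _) _)
    rw [hsqrt2, haE, hsinv,
      ← ENNReal.ofReal_mul (le_of_lt haRpos),
      ← ENNReal.ofReal_mul (inv_nonneg.mpr (le_of_lt hsRpos)),
      ← ENNReal.ofReal_mul (by linarith [hrpow1] : (0:ℝ) ≤ 1 - (1 - (ε^2/4) ^ α))]
    apply ENNReal.ofReal_le_ofReal
    apply le_of_eq
    have h14 : 1 - (1 - (ε^2/4)^α) = (ε^2/4)^α := by ring
    rw [h14]
    have hsplit : (ε^2/4 : ℝ) ^ α = ε ^ (2*α) * (1/4:ℝ)^α := by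
      rw [show (ε^2/4 : ℝ) = ε^2 * (1/4) by ring,
        Real.mul_rpow (sq_nonneg ε) (by norm_num)]
      congr 1
      rw [← Real.rpow_natCast ε 2, ← Real.rpow_mul hε.le]
      norm_num
    rw [hsplit, hεβ, div_pow, div_eq_mul_inv]
    ring
  have hUPtop : alphaRadial (n+1) α (cap u ε) ≠ ⊤ :=
    (lt_of_le_of_lt hUP ENNReal.ofReal_lt_top).ne
  constructor
  · calc sR⁻¹ * aR * ((1/4:ℝ)^α * ((Real.sqrt 2)^n)⁻¹) * ε ^ β
        = (ENNReal.ofReal (sR⁻¹ * aR * ((1/4:ℝ)^α * ((Real.sqrt 2)^n)⁻¹) * ε ^ β)).toReal := by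
          rw [ENNReal.toReal_ofReal (by positivity)]
      _ ≤ (alphaRadial (n+1) α (cap u ε)).toReal := ENNReal.toReal_mono hUPtop hLO
  · exact ENNReal.toReal_le_of_le_ofReal (by positivity) hUP


end
end
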